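/- arXiv:2203.13765 — 11 statements merged into one kernel-verified Lean document; each statement's English description precedes it below -/
import Mathlib

section
/- Let F be a simple graph with ‖F‖ edges that admits a proper edge coloring whose color classes L_1, …, L_r satisfy |L_1| ≥ |L_2| ≥ ⋯ ≥ |L_r|, |L_1| ≥ 3 and |L_r| ≥ 2 (i.e., every color class has at least 2 edges and some class has at least 3). Then F has full spectrum: Spec(F) = {0, 1, …, ‖F‖−2} ∪ {‖F‖}; that is, for every k with 0 ≤ k ≤ ‖F‖ and k ≠ ‖F‖−1 there is a proper edge coloring of F with exactly k uniquely colored edges, and no proper edge coloring of F has exactly ‖F‖−1 uniquely colored edges. -/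
open SimpleGraph

/-- A proper edge coloring of `G`: edges sharing a vertex receive distinct colors. -/
def IsProperEdgeColoring {V : Type*} (G : SimpleGraph V) (c : Sym2 V → ℕ) : Prop :=
  ∀ e₁ ∈ G.edgeSet, ∀ e₂ ∈ G.edgeSet,
    e₁ ≠ e₂ → (∃ v, v ∈ e₁ ∧ v ∈ e₂) → c e₁ ≠ c e₂

/-- The set of uniquely colored edges of `F` under the coloring `c`. -/
def uniqueEdges {V : Type*} (F : SimpleGraph V) (c : Sym2 V → ℕ) : Set (Sym2 V) :=
  {e | e ∈ F.edgeSet ∧ ∀ e' ∈ F.edgeSet, c e' = c e → e' = e}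

/-- `Spec F` : the set of `k` such that `F` admits a proper edge coloring with
exactly `k` uniquely colored edges. -/
def Spec {V : Type*} (F : SimpleGraph V) : Set ℕ :=
  {k | ∃ c : Sym2 V → ℕ, IsProperEdgeColoring F c ∧ (uniqueEdges F c).ncard = k}

/-- `f` realizes a copy of `H` inside `G`. -/
def IsCopy {W V : Type*} (H : SimpleGraph W) (G : SimpleGraph V) (f : W → V) : Prop :=
  Function.Injective f ∧ ∀ a b, H.Adj a b → G.Adj (f a) (f b)

/-- Number of uniquely colored edges of the copy of `H` given by `f`. -/
noncomputable def copyUniqueCount {W V : Type*} (H : SimpleGraph W) (c : Sym2 V → ℕ)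
    (f : W → V) : ℕ :=
  {e | e ∈ H.edgeSet ∧ ∀ e' ∈ H.edgeSet, c (e'.map f) = c (e.map f) → e' = e}.ncard

def ContainsKUniqueCopy {W V : Type*} (H : SimpleGraph W) (G : SimpleGraph V)
    (c : Sym2 V → ℕ) (k : ℕ) : Prop :=
  ∃ f : W → V, IsCopy H G f ∧ k ≤ copyUniqueCount H c f

def ContainsExactlyKUniqueCopy {W V : Type*} (H : SimpleGraph W) (G : SimpleGraph V)
    (c : Sym2 V → ℕ) (k : ℕ) : Prop :=
  ∃ f : W → V, IsCopy H G f ∧ copyUniqueCount H c f = k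

def ContainsRainbowCopy {W V : Type*} (H : SimpleGraph W) (G : SimpleGraph V)
    (c : Sym2 V → ℕ) : Prop :=
  ∃ f : W → V, IsCopy H G f ∧
    ∀ e₁ ∈ H.edgeSet, ∀ e₂ ∈ H.edgeSet, e₁ ≠ e₂ → c (e₁.map f) ≠ c (e₂.map f)

/-- The double star `DS_{a,b}`: a dominating edge `y x` with `a` pendant leaves at `y`
and `b` pendant leaves at `x`. -/
def doubleStar (a b : ℕ) : SimpleGraph (Fin 2 ⊕ Fin a ⊕ Fin b) :=
  SimpleGraph.fromEdgeSet
    ({s(Sum.inl 0, Sum.inl 1)} ∪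
     {e | ∃ i : Fin a, e = s(Sum.inl 0, Sum.inr (Sum.inl i))} ∪
     {e | ∃ j : Fin b, e = s(Sum.inl 1, Sum.inr (Sum.inr j))})

/-- The caterpillar `C_{a,b,c}`: a path `x₁x₂x₃` with `a`, `b`, `c` pendant leaves
attached at `x₁`, `x₂`, `x₃` respectively. -/
def caterpillar3 (a b c : ℕ) : SimpleGraph (Fin 3 ⊕ Fin a ⊕ Fin b ⊕ Fin c) :=
  SimpleGraph.fromEdgeSet
    ({s(Sum.inl 0, Sum.inl 1), s(Sum.inl 1, Sum.inl 2)} ∪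
     {e | ∃ i : Fin a, e = s(Sum.inl 0, Sum.inr (Sum.inl i))} ∪
     {e | ∃ i : Fin b, e = s(Sum.inl 1, Sum.inr (Sum.inr (Sum.inl i)))} ∪
     {e | ∃ i : Fin c, e = s(Sum.inl 2, Sum.inr (Sum.inr (Sum.inr i)))})

/-- The rooted tree of depth 2 whose root has `k` children, each with `m` pendant
leaves. -/
def depth2Tree (k m : ℕ) : SimpleGraph (Unit ⊕ Fin k ⊕ Fin k × Fin m) :=
  SimpleGraph.fromEdgeSet
    ({e | ∃ i : Fin k, e = s(Sum.inl (), Sum.inr (Sum.inl i))} ∪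
     {e | ∃ (i : Fin k) (j : Fin m),
        e = s(Sum.inr (Sum.inl i), Sum.inr (Sum.inr (i, j)))})

open Finset in

lemma select {α : Type*} [DecidableEq α] (E : Finset α) : ∀ (f : α → ℕ),
    (∀ j, (E.filter (fun e => f e = j)).Nonempty → 2 ≤ (E.filter (fun e => f e = j)).card) →
    (∃ j, 3 ≤ (E.filter (fun e => f e = j)).card) →
    ∀ k, k ≤ E.card → k ≠ E.card - 1 →
    ∃ S, S ⊆ E ∧ S.card = k ∧ ∀ j, ((E \ S).filter (fun e => f e = j) = ∅ ∨
      2 ≤ ((E \ S).filter (fun e => f e = j)).card) := by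
  induction E using Finset.strongInduction with
  | _ E ih =>
    intro f hall hbig k hk hk'
    obtain ⟨j₀, hj₀⟩ := hbig
    have hB : E.filter (fun e => f e = j₀) ⊆ E := filter_subset _ _
    have hn : 3 ≤ E.card := le_trans hj₀ (card_le_card hB)
    by_cases hEB : ∀ e ∈ E, f e = j₀
    · -- base case: one class
      by_cases hkn : k = E.card
      · refine ⟨E, subset_rfl, hkn ▸ rfl, fun j => ?_⟩
        left; simp
      · have hk2 : k ≤ E.card - 2 := by omega
        obtain ⟨S, hSE, hScard⟩ := Finset.exists_subset_card_eq (le_trans hk2 (Nat.sub_le _ _))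
        refine ⟨S, hSE, hScard, fun j => ?_⟩
        by_cases hj : j = j₀
        · right
          have : (E \ S).filter (fun e => f e = j) = E \ S := by
            apply filter_eq_self.2
            intro e he; rw [hj]; exact hEB e (mem_sdiff.1 he).1
          rw [this, card_sdiff_of_subset hSE, hScard]; omega
        · left
          apply filter_eq_empty_iff.2
          intro e he h
          exact hj (h ▸ (hEB e (mem_sdiff.1 he).1).symm ▸ rfl)
    · -- inductive case: peel off class C of color j₁ ≠ j₀
      push_neg at hEB
      obtain ⟨e₀, he₀E, he₀⟩ := hEB
      set j₁ := f e₀ with hj₁def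
      set C := E.filter (fun e => f e = j₁) with hCdef
      have hCE : C ⊆ E := filter_subset _ _
      have hCne : C.Nonempty := ⟨e₀, mem_filter.2 ⟨he₀E, rfl⟩⟩
      have hs : 2 ≤ C.card := hall j₁ hCne
      have hj01 : j₀ ≠ j₁ := fun h => he₀ (h ▸ rfl)
      set E' := E \ C with hE'def
      have hE'ss : E' ⊂ E := sdiff_ssubset hCE hCne
      -- filter identities
      have hfilt : ∀ j, j ≠ j₁ → E'.filter (fun e => f e = j) = E.filter (fun e => f e = j) := by
        intro j hj
        ext e
        simp only [mem_filter, mem_sdiff, hE'def, hCdef]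
        constructor
        · rintro ⟨⟨he, -⟩, hfe⟩; exact ⟨he, hfe⟩
        · rintro ⟨he, hfe⟩
          exact ⟨⟨he, fun hc => hj (hfe ▸ hc.2 ▸ rfl)⟩, hfe⟩
      have hfilt1 : E'.filter (fun e => f e = j₁) = ∅ := by
        apply filter_eq_empty_iff.2
        intro e he hfe
        exact (mem_sdiff.1 he).2 (mem_filter.2 ⟨(mem_sdiff.1 he).1, hfe⟩)
      have hall' : ∀ j, (E'.filter (fun e => f e = j)).Nonempty →
          2 ≤ (E'.filter (fun e => f e = j)).card := by
        intro j hne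
        by_cases hj : j = j₁
        · rw [hj, hfilt1] at hne; exact absurd hne (by simp)
        · rw [hfilt j hj] at hne ⊢; exact hall j hne
      have hbig' : ∃ j, 3 ≤ (E'.filter (fun e => f e = j)).card :=
        ⟨j₀, by rw [hfilt j₀ hj01]; exact hj₀⟩
      have hn' : 3 ≤ E'.card := le_trans hbig'.choose_spec (card_le_card (filter_subset _ _))
      have hcardE : E.card = E'.card + C.card := by
        rw [hE'def, card_sdiff_of_subset hCE]; exact (Nat.sub_add_cancel (card_le_card hCE)).symm
      -- choose t and k'
      have harith : ∃ t k', (t ≤ C.card - 2 ∨ t = C.card) ∧ t ≤ C.card ∧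
          k' ≤ E'.card ∧ k' ≠ E'.card - 1 ∧ k = t + k' := by
        set n' := E'.card; set s := C.card
        by_cases h1 : k ≤ n' - 2
        · exact ⟨0, k, Or.inl (by omega), by omega, by omega, by omega, by omega⟩
        by_cases h2 : k = n' - 1
        · by_cases h3 : 3 ≤ s
          · exact ⟨1, n' - 2, Or.inl (by omega), by omega, by omega, by omega, by omega⟩
          · exact ⟨2, n' - 3, Or.inr (by omega), by omega, by omega, by omega, by omega⟩
        by_cases h4 : k = E.card
        · exact ⟨s, n', Or.inr rfl, le_rfl, le_rfl, by omega, by omega⟩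
        · exact ⟨k - n', n', Or.inl (by omega), by omega, le_rfl, by omega, by omega⟩
      obtain ⟨t, k', htc, hts, hk'1, hk'2, hkeq⟩ := harith
      obtain ⟨T, hTC, hTcard⟩ := Finset.exists_subset_card_eq hts
      obtain ⟨S', hS'E', hS'card, hS'prop⟩ := ih E' hE'ss f hall' hbig' k' hk'1 hk'2
      refine ⟨S' ∪ T, ?_, ?_, ?_⟩
      · exact union_subset (hS'E'.trans (sdiff_subset)) (hTC.trans hCE)
      · rw [card_union_of_disjoint, hS'card, hTcard]; omega
        · exact disjoint_left.2 fun e heS' heT =>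
            (mem_sdiff.1 (hS'E' heS')).2 (hTC heT)
      · intro j
        by_cases hj : j = j₁
        · -- class j₁ : equals C \ T
          have heq : (E \ (S' ∪ T)).filter (fun e => f e = j) = C \ T := by
            ext e
            simp only [mem_filter, mem_sdiff, mem_union, hCdef, hj]
            constructor
            · rintro ⟨⟨he, hns⟩, hfe⟩
              exact ⟨⟨he, hfe⟩, fun ht => hns (Or.inr ht)⟩
            · rintro ⟨he, hnt⟩
              have heC : e ∈ C := mem_filter.2 he
              refine ⟨⟨he.1, ?_⟩, he.2⟩
              rintro (hs' | ht)
              · exact (mem_sdiff.1 (hS'E' hs')).2 heC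
              · exact hnt ht
          rw [heq]
          rcases htc with h | h
          · right; rw [card_sdiff_of_subset hTC, hTcard]; omega
          · left; rw [sdiff_eq_empty_iff_subset]
            exact (eq_of_subset_of_card_le hTC (by omega)) ▸ subset_rfl
        · -- class j ≠ j₁ : equals (E' \ S').filter
          have heq : (E \ (S' ∪ T)).filter (fun e => f e = j) =
              (E' \ S').filter (fun e => f e = j) := by
            ext e
            simp only [mem_filter, mem_sdiff, mem_union, hE'def]
            constructor
            · rintro ⟨⟨he, hns⟩, hfe⟩
              refine ⟨⟨⟨he, fun hc => hj (hfe ▸ (mem_filter.1 hc).2 ▸ rfl)⟩,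
                fun hs' => hns (Or.inl hs')⟩, hfe⟩
            · rintro ⟨⟨⟨he, hnc⟩, hns'⟩, hfe⟩
              exact ⟨⟨he, fun h => h.elim hns' (fun ht => hnc (hTC ht))⟩, hfe⟩
          rw [heq]
          exact hS'prop j


/-- If `F` admits a proper edge coloring in which every (nonempty) color
class has at least 2 edges and some color class has at least 3 edges, then `F` has
full spectrum `{0, 1, …, ‖F‖−2} ∪ {‖F‖}`. -/
theorem full_spectrum_of_coloring {V : Type*} [Fintype V] (F : SimpleGraph V)
    (c : Sym2 V → ℕ) (hc : IsProperEdgeColoring F c)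
    (hall : ∀ k : ℕ, (∃ e ∈ F.edgeSet, c e = k) →
      2 ≤ {e ∈ F.edgeSet | c e = k}.ncard)
    (hbig : ∃ k : ℕ, 3 ≤ {e ∈ F.edgeSet | c e = k}.ncard) :
    Spec F = {k : ℕ | k ≤ F.edgeSet.ncard ∧ k ≠ F.edgeSet.ncard - 1} := by
  classical
  have hEfin : F.edgeSet.Finite := Set.toFinite _
  set Ef : Finset (Sym2 V) := hEfin.toFinset with hEfdef
  have hmemEf : ∀ e, e ∈ Ef ↔ e ∈ F.edgeSet := fun e => hEfin.mem_toFinset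
  have hncard : F.edgeSet.ncard = Ef.card := Set.ncard_eq_toFinset_card _ hEfin
  have hclass : ∀ j, {e ∈ F.edgeSet | c e = j}.ncard =
      (Ef.filter (fun e => c e = j)).card := by
    intro j
    have : {e ∈ F.edgeSet | c e = j} = ↑(Ef.filter (fun e => c e = j)) := by
      ext e; simp [hmemEf e]
    rw [this, Set.ncard_coe_finset]
  -- n ≥ 3
  obtain ⟨j₀, hj₀⟩ := hbig
  have hn3 : 3 ≤ Ef.card := by
    rw [hclass] at hj₀
    exact le_trans hj₀ (Finset.card_le_card (Finset.filter_subset _ _))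
  ext k
  simp only [Spec, Set.mem_setOf_eq, hncard]
  constructor
  · rintro ⟨c', hc', hcount⟩
    have hUsub : uniqueEdges F c' ⊆ F.edgeSet := fun e he => he.1
    have hUle : k ≤ Ef.card := by
      rw [← hcount, ← hncard]; exact Set.ncard_le_ncard hUsub hEfin
    refine ⟨hUle, ?_⟩
    intro hkeq
    have hdiff : (F.edgeSet \ uniqueEdges F c').ncard = 1 := by
      rw [Set.ncard_diff hUsub (hEfin.subset hUsub), hcount, hkeq, ← hncard]; omega
    obtain ⟨e₀, he₀⟩ := Set.ncard_eq_one.1 hdiff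
    have he₀E : e₀ ∈ F.edgeSet := by
      have : e₀ ∈ F.edgeSet \ uniqueEdges F c' := he₀ ▸ rfl
      exact this.1
    have he₀U : e₀ ∉ uniqueEdges F c' := by
      have : e₀ ∈ F.edgeSet \ uniqueEdges F c' := he₀ ▸ rfl
      exact this.2
    have : ∃ e' ∈ F.edgeSet, c' e' = c' e₀ ∧ e' ≠ e₀ := by
      by_contra h
      push_neg at h
      exact he₀U ⟨he₀E, fun e' he' hce => h e' he' hce⟩
    obtain ⟨e', he'E, hce, hne⟩ := this
    have he'U : e' ∉ uniqueEdges F c' := by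
      intro hu
      exact hne.symm (hu.2 e₀ he₀E hce.symm)
    have : e' ∈ F.edgeSet \ uniqueEdges F c' := ⟨he'E, he'U⟩
    rw [he₀] at this
    exact hne this
  · rintro ⟨hk1, hk2⟩
    obtain ⟨S, hSE, hScard, hSprop⟩ := select Ef c
      (fun j hne => by rw [← hclass]; exact hall j (by
        obtain ⟨e, he⟩ := hne
        exact ⟨e, (hmemEf e).1 (Finset.mem_filter.1 he).1, (Finset.mem_filter.1 he).2⟩))
      ⟨j₀, by rw [← hclass]; exact hj₀⟩ k hk1 hk2
    obtain ⟨g, hg⟩ := exists_injective_nat (Sym2 V)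
    set N := Ef.sup c + 1 with hNdef
    have hbound : ∀ e ∈ Ef, c e < N := fun e he =>
      Nat.lt_succ_of_le (Finset.le_sup he)
    set c'' : Sym2 V → ℕ := fun e => if e ∈ S then N + g e else c e with hc''def
    have hc''S : ∀ e ∈ S, c'' e = N + g e := fun e he => by simp [hc''def, he]
    have hc''nS : ∀ e ∉ S, c'' e = c e := fun e he => by simp [hc''def, he]
    refine ⟨c'', ?_, ?_⟩
    · intro e₁ h₁ e₂ h₂ hne hshare
      by_cases h₁S : e₁ ∈ S <;> by_cases h₂S : e₂ ∈ S
      · rw [hc''S e₁ h₁S, hc''S e₂ h₂S]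
        intro h
        exact hne (hg (Nat.add_left_cancel h))
      · rw [hc''S e₁ h₁S, hc''nS e₂ h₂S]
        have : c e₂ < N := hbound e₂ ((hmemEf e₂).2 h₂)
        omega
      · rw [hc''nS e₁ h₁S, hc''S e₂ h₂S]
        have : c e₁ < N := hbound e₁ ((hmemEf e₁).2 h₁)
        omega
      · rw [hc''nS e₁ h₁S, hc''nS e₂ h₂S]
        exact hc e₁ h₁ e₂ h₂ hne hshare
    · have hUeq : uniqueEdges F c'' = ↑S := by
        ext e
        simp only [uniqueEdges, Set.mem_setOf_eq, Finset.coe_insert, Finset.mem_coe]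
        constructor
        · rintro ⟨heE, huniq⟩
          by_contra heS
          have heEf : e ∈ Ef \ S := Finset.mem_sdiff.2 ⟨(hmemEf e).2 heE, heS⟩
          have hne2 : (Finset.filter (fun e' => c e' = c e) (Ef \ S)).Nonempty :=
            ⟨e, Finset.mem_filter.2 ⟨heEf, rfl⟩⟩
          have h2 : 2 ≤ (Finset.filter (fun e' => c e' = c e) (Ef \ S)).card := by
            rcases hSprop (c e) with h | h
            · rw [h] at hne2; exact absurd hne2 (by simp)
            · exact h
          obtain ⟨e', he'mem, he'ne⟩ := Finset.exists_mem_ne (lt_of_lt_of_le one_lt_two h2) e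
          obtain ⟨he'Ef, he'c⟩ := Finset.mem_filter.1 he'mem
          have he'S : e' ∉ S := (Finset.mem_sdiff.1 he'Ef).2
          have : c'' e' = c'' e := by
            rw [hc''nS e' he'S, hc''nS e heS, he'c]
          exact he'ne (huniq e' ((hmemEf e').1 (Finset.mem_sdiff.1 he'Ef).1) this)
        · intro heS
          refine ⟨(hmemEf e).1 (hSE heS), fun e' he'E hce => ?_⟩
          by_cases he'S : e' ∈ S
          · rw [hc''S e' he'S, hc''S e heS] at hce
            exact hg (Nat.add_left_cancel hce)
          · rw [hc''nS e' he'S, hc''S e heS] at hce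
            have : c e' < N := hbound e' ((hmemEf e').2 he'E)
            omega
      rw [hUeq, Set.ncard_coe_finset, hScard]
end

section
/- For the short cycles one has Spec(C_3) = {3}, Spec(C_4) = {0, 2, 4}, and Spec(C_5) = {1, 3, 5}; that is, for each n ∈ {3,4,5} and each natural number k, the cycle C_n admits a proper edge coloring with exactly k uniquely colored edges if and only if k lies in the indicated set. -/
open SimpleGraph

lemma ncard_unique {n : ℕ} [NeZero n] (c : Sym2 (Fin n) → ℕ)
    (hE : ∀ e : Sym2 (Fin n), e ∈ (cycleGraph n).edgeSet ↔ ∃ i : Fin n, e = s(i, i+1))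
    (hinj : Function.Injective (fun i : Fin n => s(i, i+1))) :
    (uniqueEdges (cycleGraph n) c).ncard =
      (Finset.univ.filter (fun i : Fin n =>
        ∀ j : Fin n, c s(j, j+1) = c s(i, i+1) → j = i)).card := by
  have hset : uniqueEdges (cycleGraph n) c =
      ↑((Finset.univ.filter (fun i : Fin n =>
        ∀ j : Fin n, c s(j, j+1) = c s(i, i+1) → j = i)).image (fun i : Fin n => s(i, i+1))) := by
    ext e
    simp only [uniqueEdges, Set.mem_setOf_eq, Finset.coe_image, Set.mem_image,
      Finset.mem_coe, Finset.mem_filter, Finset.mem_univ, true_and]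
    constructor
    · rintro ⟨he, hu⟩
      obtain ⟨i, rfl⟩ := (hE _).1 he
      exact ⟨i, fun j hj => hinj (hu _ ((hE _).2 ⟨j, rfl⟩) hj), rfl⟩
    · rintro ⟨i, hi, rfl⟩
      refine ⟨(hE _).2 ⟨i, rfl⟩, fun e' he' hcc => ?_⟩
      obtain ⟨j, rfl⟩ := (hE _).1 he'
      rw [hi j hcc]
  rw [hset, Set.ncard_coe_finset, Finset.card_image_of_injective _ hinj]

lemma forall_fin5 (p : Fin 5 → Prop) : (∀ j, p j) ↔ p 0 ∧ p 1 ∧ p 2 ∧ p 3 ∧ p 4 :=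
  ⟨fun h => ⟨h 0, h 1, h 2, h 3, h 4⟩, by intro h j; fin_cases j <;> tauto⟩
lemma forall_fin4 (p : Fin 4 → Prop) : (∀ j, p j) ↔ p 0 ∧ p 1 ∧ p 2 ∧ p 3 :=
  ⟨fun h => ⟨h 0, h 1, h 2, h 3⟩, by intro h j; fin_cases j <;> tauto⟩
lemma forall_fin3 (p : Fin 3 → Prop) : (∀ j, p j) ↔ p 0 ∧ p 1 ∧ p 2 :=
  ⟨fun h => ⟨h 0, h 1, h 2⟩, by intro h j; fin_cases j <;> tauto⟩

lemma spec3 : Spec (SimpleGraph.cycleGraph 3) = {3} := by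
  have hE : ∀ e : Sym2 (Fin 3), e ∈ (cycleGraph 3).edgeSet ↔ ∃ i : Fin 3, e = s(i, i+1) := by
    decide
  have hinj : Function.Injective (fun i : Fin 3 => s(i, i+1)) := by decide
  ext k
  simp only [Spec, Set.mem_setOf_eq, Set.mem_singleton_iff]
  constructor
  · rintro ⟨c, hc, rfl⟩
    rw [ncard_unique c hE hinj]
    have h01 : c s(0,1) ≠ c s(1,2) := hc _ (by decide) _ (by decide) (by decide) ⟨1, by decide⟩
    have h12 : c s(1,2) ≠ c s(2,0) := hc _ (by decide) _ (by decide) (by decide) ⟨2, by decide⟩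
    have h20 : c s(2,0) ≠ c s(0,1) := hc _ (by decide) _ (by decide) (by decide) ⟨0, by decide⟩
    have h01s := Ne.symm h01; have h12s := Ne.symm h12; have h20s := Ne.symm h20
    rw [Finset.card_filter, Fin.sum_univ_three]
    simp_all [forall_fin3, -Finset.sum_boole]
  · rintro rfl
    refine ⟨fun e => if e = s(0,1) then 0 else if e = s(1,2) then 1 else 2, by unfold IsProperEdgeColoring; decide, ?_⟩
    rw [ncard_unique _ hE hinj]; decide

lemma spec4 : Spec (SimpleGraph.cycleGraph 4) = {0, 2, 4} := by
  have hE : ∀ e : Sym2 (Fin 4), e ∈ (cycleGraph 4).edgeSet ↔ ∃ i : Fin 4, e = s(i, i+1) := by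
    decide
  have hinj : Function.Injective (fun i : Fin 4 => s(i, i+1)) := by decide
  ext k
  simp only [Spec, Set.mem_setOf_eq, Set.mem_insert_iff, Set.mem_singleton_iff]
  constructor
  · rintro ⟨c, hc, rfl⟩
    rw [ncard_unique c hE hinj]
    have h01 : c s(0,1) ≠ c s(1,2) := hc _ (by decide) _ (by decide) (by decide) ⟨1, by decide⟩
    have h12 : c s(1,2) ≠ c s(2,3) := hc _ (by decide) _ (by decide) (by decide) ⟨2, by decide⟩
    have h23 : c s(2,3) ≠ c s(3,0) := hc _ (by decide) _ (by decide) (by decide) ⟨3, by decide⟩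
    have h30 : c s(3,0) ≠ c s(0,1) := hc _ (by decide) _ (by decide) (by decide) ⟨0, by decide⟩
    have h01s := Ne.symm h01; have h12s := Ne.symm h12
    have h23s := Ne.symm h23; have h30s := Ne.symm h30
    by_cases h02 : c s(0,1) = c s(2,3) <;> by_cases h13 : c s(1,2) = c s(3,0)
    all_goals try have h02s : c s(2,3) ≠ c s(0,1) := Ne.symm h02
    all_goals try have h13s : c s(3,0) ≠ c s(1,2) := Ne.symm h13
    all_goals rw [Finset.card_filter, Fin.sum_univ_four]
    all_goals simp_all [forall_fin4, -Finset.sum_boole]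
  · rintro (rfl | rfl | rfl)
    · refine ⟨fun e => if e = s(0,1) ∨ e = s(2,3) then 0 else 1, by unfold IsProperEdgeColoring; decide, ?_⟩
      rw [ncard_unique _ hE hinj]; decide
    · refine ⟨fun e => if e = s(0,1) ∨ e = s(2,3) then 0 else if e = s(1,2) then 1 else 2,
        by unfold IsProperEdgeColoring; decide, ?_⟩
      rw [ncard_unique _ hE hinj]; decide
    · refine ⟨fun e => if e = s(0,1) then 0 else if e = s(1,2) then 1 else
        if e = s(2,3) then 2 else 3, by unfold IsProperEdgeColoring; decide, ?_⟩
      rw [ncard_unique _ hE hinj]; decide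

lemma spec5 : Spec (SimpleGraph.cycleGraph 5) = {1, 3, 5} := by
  have hE : ∀ e : Sym2 (Fin 5), e ∈ (cycleGraph 5).edgeSet ↔ ∃ i : Fin 5, e = s(i, i+1) := by
    decide
  have hinj : Function.Injective (fun i : Fin 5 => s(i, i+1)) := by decide
  ext k
  simp only [Spec, Set.mem_setOf_eq, Set.mem_insert_iff, Set.mem_singleton_iff]
  constructor
  · rintro ⟨c, hc, rfl⟩
    rw [ncard_unique c hE hinj]
    have h01 : c s(0,1) ≠ c s(1,2) := hc _ (by decide) _ (by decide) (by decide) ⟨1, by decide⟩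
    have h12 : c s(1,2) ≠ c s(2,3) := hc _ (by decide) _ (by decide) (by decide) ⟨2, by decide⟩
    have h23 : c s(2,3) ≠ c s(3,4) := hc _ (by decide) _ (by decide) (by decide) ⟨3, by decide⟩
    have h34 : c s(3,4) ≠ c s(4,0) := hc _ (by decide) _ (by decide) (by decide) ⟨4, by decide⟩
    have h40 : c s(4,0) ≠ c s(0,1) := hc _ (by decide) _ (by decide) (by decide) ⟨0, by decide⟩
    have h01s := Ne.symm h01; have h12s := Ne.symm h12; have h23s := Ne.symm h23
    have h34s := Ne.symm h34; have h40s := Ne.symm h40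
    by_cases h02 : c s(0,1) = c s(2,3) <;> by_cases h13 : c s(1,2) = c s(3,4) <;>
      by_cases h24 : c s(2,3) = c s(4,0) <;> by_cases h30 : c s(3,4) = c s(0,1) <;>
      by_cases h14 : c s(1,2) = c s(4,0)
    all_goals try exact absurd (h02.trans h24) h40s
    all_goals try exact absurd (h30.trans h02) (Ne.symm h23)
    all_goals try exact absurd (h13.trans h30) h01
    all_goals try exact absurd (h13.symm.trans h14) h34
    all_goals try exact absurd (h24.symm.trans h14.symm) h12s
    all_goals try have h02s : c s(2,3) ≠ c s(0,1) := Ne.symm h02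
    all_goals try have h13s : c s(3,4) ≠ c s(1,2) := Ne.symm h13
    all_goals try have h24s : c s(4,0) ≠ c s(2,3) := Ne.symm h24
    all_goals try have h30s : c s(0,1) ≠ c s(3,4) := Ne.symm h30
    all_goals try have h14s : c s(4,0) ≠ c s(1,2) := Ne.symm h14
    all_goals rw [Finset.card_filter, Fin.sum_univ_five]
    all_goals simp_all [forall_fin5, -Finset.sum_boole]
  · rintro (rfl | rfl | rfl)
    · refine ⟨fun e => if e = s(0,1) ∨ e = s(2,3) then 0 else
        if e = s(1,2) ∨ e = s(3,4) then 1 else 2, by unfold IsProperEdgeColoring; decide, ?_⟩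
      rw [ncard_unique _ hE hinj]; decide
    · refine ⟨fun e => if e = s(0,1) ∨ e = s(2,3) then 0 else
        if e = s(1,2) then 1 else if e = s(3,4) then 2 else 3, by unfold IsProperEdgeColoring; decide, ?_⟩
      rw [ncard_unique _ hE hinj]; decide
    · refine ⟨fun e => if e = s(0,1) then 0 else if e = s(1,2) then 1 else
        if e = s(2,3) then 2 else if e = s(3,4) then 3 else 4, by unfold IsProperEdgeColoring; decide, ?_⟩
      rw [ncard_unique _ hE hinj]; decide


/-- `Spec(C₃) = {3}`, `Spec(C₄) = {0,2,4}`, `Spec(C₅) = {1,3,5}`. -/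
theorem short_cycle_spectrum :
    Spec (SimpleGraph.cycleGraph 3) = {3} ∧
    Spec (SimpleGraph.cycleGraph 4) = {0, 2, 4} ∧
    Spec (SimpleGraph.cycleGraph 5) = {1, 3, 5} := by
  exact ⟨spec3, spec4, spec5⟩
end

section
/- For every k ≥ 5, the path P_k with k edges has full spectrum: Spec(P_k) = {0, 1, …, k−2} ∪ {k}; that is, for every κ with 0 ≤ κ ≤ k and κ ≠ k−1 there is a proper edge coloring of P_k with exactly κ uniquely colored edges, and no proper edge coloring of P_k has exactly k−1 uniquely colored edges. -/
open SimpleGraph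

namespace PathSpecAux

open Fin.NatCast

def E (k n : ℕ) : Sym2 (Fin (k+1)) := s((n : Fin (k+1)), ((n+1 : ℕ) : Fin (k+1)))

def col (k : ℕ) (g : ℕ → ℕ) : Sym2 (Fin (k+1)) → ℕ :=
  Sym2.lift ⟨fun a b => g (min a.val b.val), fun a b => by simp only [min_comm]⟩

lemma val_cast {k : ℕ} (n : ℕ) (h : n ≤ k) : ((n : Fin (k+1)) : ℕ) = n :=
  Fin.val_cast_of_lt (by omega)

lemma E_mem {k n : ℕ} (hn : n < k) : E k n ∈ (pathGraph (k+1)).edgeSet := by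
  rw [E, SimpleGraph.mem_edgeSet, pathGraph_adj]
  left
  rw [val_cast n (by omega), val_cast (n+1) (by omega)]

lemma mem_edgeSet {k : ℕ} {e : Sym2 (Fin (k+1))} :
    e ∈ (pathGraph (k+1)).edgeSet ↔ ∃ n < k, e = E k n := by
  constructor
  · induction e using Sym2.ind with
    | _ a b =>
      rw [SimpleGraph.mem_edgeSet, pathGraph_adj]
      rintro (h | h)
      · refine ⟨a.val, by omega, ?_⟩
        have ha' : ((a.val : ℕ) : Fin (k+1)) = a := Fin.ext (val_cast a.val (by omega))
        have hb' : (((a.val+1 : ℕ)) : Fin (k+1)) = b :=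
          Fin.ext (by rw [val_cast (a.val+1) (by omega)]; omega)
        rw [E, ha', hb']
      · refine ⟨b.val, by omega, ?_⟩
        have ha' : ((b.val : ℕ) : Fin (k+1)) = b := Fin.ext (val_cast b.val (by omega))
        have hb' : (((b.val+1 : ℕ)) : Fin (k+1)) = a :=
          Fin.ext (by rw [val_cast (b.val+1) (by omega)]; omega)
        rw [E, ha', hb', Sym2.eq_swap]
  · rintro ⟨n, hn, rfl⟩; exact E_mem hn

lemma E_inj {k m n : ℕ} (hm : m < k) (hn : n < k) (h : E k m = E k n) : m = n := by
  rw [E, E, Sym2.eq_iff] at h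
  rcases h with ⟨h1, h2⟩ | ⟨h1, h2⟩ <;>
  · have := congrArg Fin.val h1
    have := congrArg Fin.val h2
    rw [val_cast (k := k) _ (by omega), val_cast (k := k) _ (by omega)] at *
    omega

lemma mem_E {k n : ℕ} (hn : n < k) {v : Fin (k+1)} :
    v ∈ E k n ↔ (v : ℕ) = n ∨ (v : ℕ) = n + 1 := by
  rw [E, Sym2.mem_iff]
  constructor
  · rintro (rfl | rfl)
    · left; exact val_cast n (by omega)
    · right; exact val_cast (n+1) (by omega)
  · rintro (h | h)
    · left; exact Fin.ext (by rw [val_cast n (by omega)]; omega)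
    · right; exact Fin.ext (by rw [val_cast (n+1) (by omega)]; omega)

lemma col_E {k n : ℕ} (g : ℕ → ℕ) (hn : n < k) : col k g (E k n) = g n := by
  rw [col, E, Sym2.lift_mk]
  simp only
  rw [val_cast n (by omega), val_cast (n+1) (by omega), min_eq_left (by omega)]

lemma proper {k : ℕ} {g : ℕ → ℕ} (hg : ∀ n, n + 1 < k → g n ≠ g (n+1)) :
    IsProperEdgeColoring (pathGraph (k+1)) (col k g) := by
  intro e₁ h₁ e₂ h₂ hne hv
  obtain ⟨m, hm, rfl⟩ := mem_edgeSet.mp h₁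
  obtain ⟨n, hn, rfl⟩ := mem_edgeSet.mp h₂
  obtain ⟨v, hv₁, hv₂⟩ := hv
  rw [mem_E hm] at hv₁
  rw [mem_E hn] at hv₂
  have hmn : m ≠ n := fun h => hne (by rw [h])
  rw [col_E g hm, col_E g hn]
  rcases (by omega : m + 1 = n ∨ n + 1 = m) with h | h
  · rw [← h]; exact hg m (by omega)
  · rw [← h]; exact (hg n (by omega)).symm

lemma unique_eq {k : ℕ} (g : ℕ → ℕ) :
    uniqueEdges (pathGraph (k+1)) (col k g) =
      E k '' {n | n < k ∧ ∀ m < k, g m = g n → m = n} := by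
  ext e
  simp only [uniqueEdges, Set.mem_setOf_eq, Set.mem_image]
  constructor
  · rintro ⟨he, hu⟩
    obtain ⟨n, hn, rfl⟩ := mem_edgeSet.mp he
    exact ⟨n, ⟨hn, fun m hm hgm =>
      E_inj hm hn (hu (E k m) (E_mem hm) (by rw [col_E g hm, col_E g hn, hgm]))⟩, rfl⟩
  · rintro ⟨n, ⟨hn, hP⟩, rfl⟩
    refine ⟨E_mem hn, fun e' he' hc => ?_⟩
    obtain ⟨m, hm, rfl⟩ := mem_edgeSet.mp he'
    rw [col_E g hm, col_E g hn] at hc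
    rw [hP m hm hc]

lemma card_unique {k : ℕ} (g : ℕ → ℕ) :
    (uniqueEdges (pathGraph (k+1)) (col k g)).ncard
      = {n | n < k ∧ ∀ m < k, g m = g n → m = n}.ncard := by
  rw [unique_eq]
  exact Set.ncard_image_of_injOn (fun m hm n hn h => E_inj hm.1 hn.1 h)

lemma mem_spec {k : ℕ} (g : ℕ → ℕ) (hg : ∀ n, n + 1 < k → g n ≠ g (n+1)) :
    {n | n < k ∧ ∀ m < k, g m = g n → m = n}.ncard ∈ Spec (pathGraph (k+1)) :=
  ⟨col k g, proper hg, card_unique g⟩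

lemma edgeSet_eq {k : ℕ} : (pathGraph (k+1)).edgeSet = E k '' Set.Iio k := by
  ext e
  rw [mem_edgeSet]
  constructor
  · rintro ⟨n, hn, rfl⟩; exact ⟨n, hn, rfl⟩
  · rintro ⟨n, hn, rfl⟩; exact ⟨n, hn, rfl⟩

lemma edgeSet_ncard {k : ℕ} : (pathGraph (k+1)).edgeSet.ncard = k := by
  have h1 : (Set.Iio k).ncard = k := by
    rw [← Finset.coe_range, Set.ncard_coe_finset, Finset.card_range]
  rw [edgeSet_eq]
  exact (Set.ncard_image_of_injOn (fun m hm n hn h => E_inj hm hn h)).trans h1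

lemma count_ge {k r : ℕ} : {n | n < k ∧ r ≤ n}.ncard = k - r := by
  rw [show {n | n < k ∧ r ≤ n} = ↑(Finset.Ico r k) from by
    ext n; simp [Finset.mem_Ico, and_comm], Set.ncard_coe_finset, Nat.card_Ico]

lemma count2 {k : ℕ} (hk : 5 ≤ k) : {n | n < k ∧ n ≠ 0 ∧ n ≠ 2}.ncard = k - 2 := by
  rw [show {n | n < k ∧ n ≠ 0 ∧ n ≠ 2} = ↑(Finset.range k \ {0, 2}) from by
    ext n; simp [Finset.mem_sdiff, Finset.mem_range, Finset.mem_insert],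
    Set.ncard_coe_finset, Finset.card_sdiff_of_subset (by
      intro x hx; simp only [Finset.mem_insert, Finset.mem_singleton] at hx
      simp only [Finset.mem_range]; omega)]
  simp [Finset.card_range]

lemma count3 {k : ℕ} (hk : 5 ≤ k) :
    {n | n < k ∧ n ≠ 0 ∧ n ≠ 2 ∧ n ≠ 4}.ncard = k - 3 := by
  rw [show {n | n < k ∧ n ≠ 0 ∧ n ≠ 2 ∧ n ≠ 4} = ↑(Finset.range k \ {0, 2, 4}) from by
    ext n; simp [Finset.mem_sdiff, Finset.mem_range, Finset.mem_insert],
    Set.ncard_coe_finset, Finset.card_sdiff_of_subset (by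
      intro x hx; simp only [Finset.mem_insert, Finset.mem_singleton] at hx
      simp only [Finset.mem_range]; omega)]
  simp [Finset.card_range]

def gA (r n : ℕ) : ℕ := if n < r then n % 2 else n + 2
def gB (n : ℕ) : ℕ := if n = 0 ∨ n = 2 then 0 else n + 1
def gC (n : ℕ) : ℕ := if n = 0 ∨ n = 2 ∨ n = 4 then 0 else n + 1

lemma spec_main {k r : ℕ} (hk : 5 ≤ k) (hr : r = 0 ∨ 4 ≤ r) (hrk : r ≤ k) :
    k - r ∈ Spec (pathGraph (k+1)) := by
  have h := mem_spec (k := k) (gA r) (fun n hn => by unfold gA; split_ifs <;> omega)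
  have hset : {n | n < k ∧ ∀ m < k, gA r m = gA r n → m = n} = {n | n < k ∧ r ≤ n} := by
    ext n
    simp only [Set.mem_setOf_eq]
    constructor
    · rintro ⟨hn, hu⟩
      refine ⟨hn, ?_⟩
      by_contra hnr
      push_neg at hnr
      have hr4 : 4 ≤ r := by omega
      rcases Nat.lt_or_ge n 2 with h2 | h2
      · have := hu (n + 2) (by omega)
          (by unfold gA; rw [if_pos (by omega), if_pos hnr]; omega)
        omega
      · have := hu (n - 2) (by omega)
          (by unfold gA; rw [if_pos (by omega), if_pos hnr]; omega)
        omega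
    · rintro ⟨hn, hrn⟩
      refine ⟨hn, fun m hm hgm => ?_⟩
      unfold gA at hgm
      split_ifs at hgm <;> omega
  rwa [hset, count_ge] at h

lemma spec2 {k : ℕ} (hk : 5 ≤ k) : k - 2 ∈ Spec (pathGraph (k+1)) := by
  have h := mem_spec (k := k) gB (fun n hn => by unfold gB; split_ifs <;> simp_all <;> omega)
  have hset : {n | n < k ∧ ∀ m < k, gB m = gB n → m = n}
      = {n | n < k ∧ n ≠ 0 ∧ n ≠ 2} := by
    ext n
    simp only [Set.mem_setOf_eq]
    constructor
    · rintro ⟨hn, hu⟩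
      refine ⟨hn, ?_, ?_⟩
      · rintro rfl
        have := hu 2 (by omega) (by unfold gB; norm_num)
        omega
      · rintro rfl
        have := hu 0 (by omega) (by unfold gB; norm_num)
        omega
    · rintro ⟨hn, h0, h2⟩
      refine ⟨hn, fun m hm hgm => ?_⟩
      unfold gB at hgm
      split_ifs at hgm <;> omega
  rwa [hset, count2 hk] at h

lemma spec3 {k : ℕ} (hk : 5 ≤ k) : k - 3 ∈ Spec (pathGraph (k+1)) := by
  have h := mem_spec (k := k) gC (fun n hn => by unfold gC; split_ifs <;> simp_all <;> omega)
  have hset : {n | n < k ∧ ∀ m < k, gC m = gC n → m = n}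
      = {n | n < k ∧ n ≠ 0 ∧ n ≠ 2 ∧ n ≠ 4} := by
    ext n
    simp only [Set.mem_setOf_eq]
    constructor
    · rintro ⟨hn, hu⟩
      refine ⟨hn, ?_, ?_, ?_⟩
      · rintro rfl
        have := hu 2 (by omega) (by unfold gC; norm_num)
        omega
      · rintro rfl
        have := hu 0 (by omega) (by unfold gC; norm_num)
        omega
      · rintro rfl
        have := hu 0 (by omega) (by unfold gC; norm_num)
        omega
    · rintro ⟨hn, h0, h2, h4⟩
      refine ⟨hn, fun m hm hgm => ?_⟩
      unfold gC at hgm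
      split_ifs at hgm <;> omega
  rwa [hset, count3 hk] at h

end PathSpecAux


/-- For `k ≥ 5` the path `P_k` with `k` edges (i.e. `k+1` vertices) has
full spectrum `{0, 1, …, k−2} ∪ {k}`. -/
theorem path_full_spectrum (k : ℕ) (hk : 5 ≤ k) :
    Spec (SimpleGraph.pathGraph (k + 1)) = {κ : ℕ | κ ≤ k ∧ κ ≠ k - 1} := by
  ext κ
  simp only [Set.mem_setOf_eq]
  constructor
  · rintro ⟨c, hc, rfl⟩
    have hsub : uniqueEdges (pathGraph (k+1)) c ⊆ (pathGraph (k+1)).edgeSet :=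
      fun e he => he.1
    have hfin : (pathGraph (k+1)).edgeSet.Finite := Set.toFinite _
    have hle : (uniqueEdges (pathGraph (k+1)) c).ncard ≤ k :=
      le_trans (Set.ncard_le_ncard hsub hfin) (le_of_eq PathSpecAux.edgeSet_ncard)
    refine ⟨hle, fun hcontra => ?_⟩
    have hdiff : ((pathGraph (k+1)).edgeSet \ uniqueEdges (pathGraph (k+1)) c).ncard = 1 := by
      rw [Set.ncard_diff hsub, PathSpecAux.edgeSet_ncard, hcontra]
      omega
    obtain ⟨e, he⟩ := Set.ncard_eq_one.mp hdiff
    have hemem : e ∈ (pathGraph (k+1)).edgeSet \ uniqueEdges (pathGraph (k+1)) c := by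
      rw [he]; exact Set.mem_singleton e
    obtain ⟨heE, heU⟩ := hemem
    have hnu : ¬ (∀ e' ∈ (pathGraph (k+1)).edgeSet, c e' = c e → e' = e) :=
      fun h => heU ⟨heE, h⟩
    push_neg at hnu
    obtain ⟨e', he'E, hce, hne⟩ := hnu
    have he'U : e' ∉ uniqueEdges (pathGraph (k+1)) c :=
      fun h => hne ((h.2 e heE hce.symm).symm)
    have : e' ∈ ({e} : Set (Sym2 (Fin (k+1)))) := by
      rw [← he]; exact ⟨he'E, he'U⟩
    exact hne this
  · rintro ⟨hle, hne⟩
    rcases (by omega : (k - κ = 0 ∨ 4 ≤ k - κ) ∨ k - κ = 2 ∨ k - κ = 3) with h | h | h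
    · rw [show κ = k - (k - κ) by omega]
      exact PathSpecAux.spec_main hk h (by omega)
    · rw [show κ = k - 2 by omega]
      exact PathSpecAux.spec2 hk
    · rw [show κ = k - 3 by omega]
      exact PathSpecAux.spec3 hk
end

section
/- For the short paths one has Spec(P_1) = {1}, Spec(P_2) = {2}, Spec(P_3) = {1, 3}, and Spec(P_4) = {0, 2, 4}; that is, for each k ∈ {1,2,3,4} and each natural number κ, the path P_k with k edges admits a proper edge coloring with exactly κ uniquely colored edges if and only if κ lies in the indicated set. -/
open SimpleGraph

section Helpers

lemma uniqueEdges_eq_filter {V : Type*} [DecidableEq V] (F : SimpleGraph V) (c : Sym2 V → ℕ)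
    (s : Finset (Sym2 V)) (h : F.edgeSet = ↑s) :
    uniqueEdges F c = ↑(s.filter fun e => ∀ e' ∈ s, c e' = c e → e' = e) := by
  ext e
  simp only [uniqueEdges, h, Set.mem_setOf_eq, Finset.coe_filter, Finset.mem_coe]

lemma edgeSet_P2 : (pathGraph 2).edgeSet = ↑({s(0,1)} : Finset (Sym2 (Fin 2))) := by
  ext e
  induction e using Sym2.ind with
  | _ a b =>
    rw [SimpleGraph.mem_edgeSet, pathGraph_adj]
    simp only [Finset.coe_singleton, Set.mem_singleton_iff]
    fin_cases a <;> fin_cases b <;> decide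

lemma edgeSet_P3 : (pathGraph 3).edgeSet = ↑({s(0,1), s(1,2)} : Finset (Sym2 (Fin 3))) := by
  ext e
  induction e using Sym2.ind with
  | _ a b =>
    rw [SimpleGraph.mem_edgeSet, pathGraph_adj]
    simp only [Finset.coe_insert, Set.mem_insert_iff, Finset.coe_singleton, Set.mem_singleton_iff]
    fin_cases a <;> fin_cases b <;> decide

lemma edgeSet_P4 : (pathGraph 4).edgeSet = ↑({s(0,1), s(1,2), s(2,3)} : Finset (Sym2 (Fin 4))) := by
  ext e
  induction e using Sym2.ind with
  | _ a b =>
    rw [SimpleGraph.mem_edgeSet, pathGraph_adj]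
    simp only [Finset.coe_insert, Set.mem_insert_iff, Finset.coe_singleton, Set.mem_singleton_iff]
    fin_cases a <;> fin_cases b <;> decide

lemma edgeSet_P5 : (pathGraph 5).edgeSet = ↑({s(0,1), s(1,2), s(2,3), s(3,4)} : Finset (Sym2 (Fin 5))) := by
  ext e
  induction e using Sym2.ind with
  | _ a b =>
    rw [SimpleGraph.mem_edgeSet, pathGraph_adj]
    simp only [Finset.coe_insert, Set.mem_insert_iff, Finset.coe_singleton, Set.mem_singleton_iff]
    fin_cases a <;> fin_cases b <;> decide

lemma isProper_iff {V : Type*} (F : SimpleGraph V) (c : Sym2 V → ℕ)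
    (s : Finset (Sym2 V)) (h : F.edgeSet = ↑s) :
    IsProperEdgeColoring F c ↔ ∀ e₁ ∈ s, ∀ e₂ ∈ s,
      e₁ ≠ e₂ → (∃ v, v ∈ e₁ ∧ v ∈ e₂) → c e₁ ≠ c e₂ := by
  simp only [IsProperEdgeColoring, h, Finset.mem_coe]

end Helpers

/-- `Spec(P₁) = {1}`, `Spec(P₂) = {2}`, `Spec(P₃) = {1,3}`,
`Spec(P₄) = {0,2,4}`, where `P_k` has `k` edges, i.e. `k+1` vertices. -/
theorem short_path_spectrum :
    Spec (SimpleGraph.pathGraph 2) = {1} ∧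
    Spec (SimpleGraph.pathGraph 3) = {2} ∧
    Spec (SimpleGraph.pathGraph 4) = {1, 3} ∧
    Spec (SimpleGraph.pathGraph 5) = {0, 2, 4} := by
  refine ⟨?_, ?_, ?_, ?_⟩
  · -- P₁
    ext k
    simp only [Spec, Set.mem_setOf_eq, Set.mem_singleton_iff]
    constructor
    · rintro ⟨c, hc, hcard⟩
      rw [uniqueEdges_eq_filter _ c _ edgeSet_P2, Set.ncard_coe_finset] at hcard
      simp only [Finset.filter_singleton] at hcard
      have hPa : ∀ e' ∈ ({s(0,1)} : Finset (Sym2 (Fin 2))), c e' = c s(0,1) → e' = s(0,1) := by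
        intro e' he'; fin_cases he' <;> intro hh <;> rfl
      rw [if_pos hPa] at hcard
      simpa using hcard.symm
    · rintro rfl
      refine ⟨fun _ => 0, ?_, ?_⟩
      · rw [isProper_iff _ _ _ edgeSet_P2]; decide
      · rw [uniqueEdges_eq_filter _ _ _ edgeSet_P2, Set.ncard_coe_finset]; decide
  · -- P₂
    ext k
    simp only [Spec, Set.mem_setOf_eq, Set.mem_singleton_iff]
    constructor
    · rintro ⟨c, hc, hcard⟩
      have hab : c s(0,1) ≠ c s(1,2) :=
        hc _ (by rw [edgeSet_P3]; decide) _ (by rw [edgeSet_P3]; decide) (by decide)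
          ⟨1, by decide⟩
      rw [uniqueEdges_eq_filter _ c _ edgeSet_P3, Set.ncard_coe_finset] at hcard
      simp only [Finset.filter_insert, Finset.filter_singleton] at hcard
      have hPa : ∀ e' ∈ ({s(0,1), s(1,2)} : Finset (Sym2 (Fin 3))), c e' = c s(0,1) → e' = s(0,1) := by
        intro e' he'; fin_cases he' <;> intro hh <;> first | rfl | (exfalso; omega)
      have hPb : ∀ e' ∈ ({s(0,1), s(1,2)} : Finset (Sym2 (Fin 3))), c e' = c s(1,2) → e' = s(1,2) := by
        intro e' he'; fin_cases he' <;> intro hh <;> first | rfl | (exfalso; omega)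
      rw [if_pos hPa, if_pos hPb] at hcard
      rw [← hcard]; simp [Finset.card_insert_of_notMem, Finset.mem_insert, Finset.mem_singleton, Sym2.eq_iff]
    · rintro rfl
      refine ⟨fun e => if e = s(0,1) then 0 else 1, ?_, ?_⟩
      · rw [isProper_iff _ _ _ edgeSet_P3]; decide
      · rw [uniqueEdges_eq_filter _ _ _ edgeSet_P3, Set.ncard_coe_finset]; decide
  · -- P₃
    ext k
    simp only [Spec, Set.mem_setOf_eq, Set.mem_insert_iff, Set.mem_singleton_iff]
    constructor
    · rintro ⟨c, hc, hcard⟩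
      have hab : c s(0,1) ≠ c s(1,2) :=
        hc _ (by rw [edgeSet_P4]; decide) _ (by rw [edgeSet_P4]; decide) (by decide)
          ⟨1, by decide⟩
      have hbd : c s(1,2) ≠ c s(2,3) :=
        hc _ (by rw [edgeSet_P4]; decide) _ (by rw [edgeSet_P4]; decide) (by decide)
          ⟨2, by decide⟩
      rw [uniqueEdges_eq_filter _ c _ edgeSet_P4, Set.ncard_coe_finset] at hcard
      simp only [Finset.filter_insert, Finset.filter_singleton] at hcard
      by_cases h : c s(0,1) = c s(2,3)
      · have hPa : ¬ ∀ e' ∈ ({s(0,1), s(1,2), s(2,3)} : Finset (Sym2 (Fin 4))), c e' = c s(0,1) → e' = s(0,1) :=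
          fun hP => absurd (hP s(2,3) (by decide) (by omega)) (by decide)
        have hPd : ¬ ∀ e' ∈ ({s(0,1), s(1,2), s(2,3)} : Finset (Sym2 (Fin 4))), c e' = c s(2,3) → e' = s(2,3) :=
          fun hP => absurd (hP s(0,1) (by decide) (by omega)) (by decide)
        have hPb : ∀ e' ∈ ({s(0,1), s(1,2), s(2,3)} : Finset (Sym2 (Fin 4))), c e' = c s(1,2) → e' = s(1,2) := by
          intro e' he'; fin_cases he' <;> intro hh <;> first | rfl | (exfalso; omega)
        rw [if_neg hPa, if_pos hPb, if_neg hPd] at hcard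
        left; rw [← hcard]; simp [Finset.card_insert_of_notMem, Finset.mem_insert, Finset.mem_singleton, Sym2.eq_iff]
      · have hPa : ∀ e' ∈ ({s(0,1), s(1,2), s(2,3)} : Finset (Sym2 (Fin 4))), c e' = c s(0,1) → e' = s(0,1) := by
          intro e' he'; fin_cases he' <;> intro hh <;> first | rfl | (exfalso; omega)
        have hPb : ∀ e' ∈ ({s(0,1), s(1,2), s(2,3)} : Finset (Sym2 (Fin 4))), c e' = c s(1,2) → e' = s(1,2) := by
          intro e' he'; fin_cases he' <;> intro hh <;> first | rfl | (exfalso; omega)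
        have hPd : ∀ e' ∈ ({s(0,1), s(1,2), s(2,3)} : Finset (Sym2 (Fin 4))), c e' = c s(2,3) → e' = s(2,3) := by
          intro e' he'; fin_cases he' <;> intro hh <;> first | rfl | (exfalso; omega)
        rw [if_pos hPa, if_pos hPb, if_pos hPd] at hcard
        right; rw [← hcard]; simp [Finset.card_insert_of_notMem, Finset.mem_insert, Finset.mem_singleton, Sym2.eq_iff]
    · rintro (rfl | rfl)
      · refine ⟨fun e => if e = s(1,2) then 1 else 0, ?_, ?_⟩
        · rw [isProper_iff _ _ _ edgeSet_P4]; decide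
        · rw [uniqueEdges_eq_filter _ _ _ edgeSet_P4, Set.ncard_coe_finset]; decide
      · refine ⟨fun e => if e = s(0,1) then 0 else if e = s(1,2) then 1 else 2, ?_, ?_⟩
        · rw [isProper_iff _ _ _ edgeSet_P4]; decide
        · rw [uniqueEdges_eq_filter _ _ _ edgeSet_P4, Set.ncard_coe_finset]; decide
  · -- P₄
    ext k
    simp only [Spec, Set.mem_setOf_eq, Set.mem_insert_iff, Set.mem_singleton_iff]
    constructor
    · rintro ⟨c, hc, hcard⟩
      have hab : c s(0,1) ≠ c s(1,2) :=
        hc _ (by rw [edgeSet_P5]; decide) _ (by rw [edgeSet_P5]; decide) (by decide)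
          ⟨1, by decide⟩
      have hbd : c s(1,2) ≠ c s(2,3) :=
        hc _ (by rw [edgeSet_P5]; decide) _ (by rw [edgeSet_P5]; decide) (by decide)
          ⟨2, by decide⟩
      have hdf : c s(2,3) ≠ c s(3,4) :=
        hc _ (by rw [edgeSet_P5]; decide) _ (by rw [edgeSet_P5]; decide) (by decide)
          ⟨3, by decide⟩
      rw [uniqueEdges_eq_filter _ c _ edgeSet_P5, Set.ncard_coe_finset] at hcard
      simp only [Finset.filter_insert, Finset.filter_singleton] at hcard
      by_cases h1 : c s(0,1) = c s(2,3) <;> by_cases h3 : c s(1,2) = c s(3,4)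
      · -- both coincidences
        have hPa : ¬ ∀ e' ∈ ({s(0,1), s(1,2), s(2,3), s(3,4)} : Finset (Sym2 (Fin 5))), c e' = c s(0,1) → e' = s(0,1) :=
          fun hP => absurd (hP s(2,3) (by decide) (by omega)) (by decide)
        have hPb : ¬ ∀ e' ∈ ({s(0,1), s(1,2), s(2,3), s(3,4)} : Finset (Sym2 (Fin 5))), c e' = c s(1,2) → e' = s(1,2) :=
          fun hP => absurd (hP s(3,4) (by decide) (by omega)) (by decide)
        have hPd : ¬ ∀ e' ∈ ({s(0,1), s(1,2), s(2,3), s(3,4)} : Finset (Sym2 (Fin 5))), c e' = c s(2,3) → e' = s(2,3) :=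
          fun hP => absurd (hP s(0,1) (by decide) (by omega)) (by decide)
        have hPf : ¬ ∀ e' ∈ ({s(0,1), s(1,2), s(2,3), s(3,4)} : Finset (Sym2 (Fin 5))), c e' = c s(3,4) → e' = s(3,4) :=
          fun hP => absurd (hP s(1,2) (by decide) (by omega)) (by decide)
        rw [if_neg hPa, if_neg hPb, if_neg hPd, if_neg hPf] at hcard
        left; rw [← hcard]; rfl
      · -- c1 = c3 only
        have hPa : ¬ ∀ e' ∈ ({s(0,1), s(1,2), s(2,3), s(3,4)} : Finset (Sym2 (Fin 5))), c e' = c s(0,1) → e' = s(0,1) :=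
          fun hP => absurd (hP s(2,3) (by decide) (by omega)) (by decide)
        have hPd : ¬ ∀ e' ∈ ({s(0,1), s(1,2), s(2,3), s(3,4)} : Finset (Sym2 (Fin 5))), c e' = c s(2,3) → e' = s(2,3) :=
          fun hP => absurd (hP s(0,1) (by decide) (by omega)) (by decide)
        have hPb : ∀ e' ∈ ({s(0,1), s(1,2), s(2,3), s(3,4)} : Finset (Sym2 (Fin 5))), c e' = c s(1,2) → e' = s(1,2) := by
          intro e' he'; fin_cases he' <;> intro hh <;> first | rfl | (exfalso; omega)
        have hPf : ∀ e' ∈ ({s(0,1), s(1,2), s(2,3), s(3,4)} : Finset (Sym2 (Fin 5))), c e' = c s(3,4) → e' = s(3,4) := by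
          intro e' he'; fin_cases he' <;> intro hh <;> first | rfl | (exfalso; omega)
        rw [if_neg hPa, if_pos hPb, if_neg hPd, if_pos hPf] at hcard
        right; left; rw [← hcard]; simp [Finset.card_insert_of_notMem, Finset.mem_insert, Finset.mem_singleton, Sym2.eq_iff]
      · -- c2 = c4 only
        have hPb : ¬ ∀ e' ∈ ({s(0,1), s(1,2), s(2,3), s(3,4)} : Finset (Sym2 (Fin 5))), c e' = c s(1,2) → e' = s(1,2) :=
          fun hP => absurd (hP s(3,4) (by decide) (by omega)) (by decide)
        have hPf : ¬ ∀ e' ∈ ({s(0,1), s(1,2), s(2,3), s(3,4)} : Finset (Sym2 (Fin 5))), c e' = c s(3,4) → e' = s(3,4) :=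
          fun hP => absurd (hP s(1,2) (by decide) (by omega)) (by decide)
        have hPa : ∀ e' ∈ ({s(0,1), s(1,2), s(2,3), s(3,4)} : Finset (Sym2 (Fin 5))), c e' = c s(0,1) → e' = s(0,1) := by
          intro e' he'; fin_cases he' <;> intro hh <;> first | rfl | (exfalso; omega)
        have hPd : ∀ e' ∈ ({s(0,1), s(1,2), s(2,3), s(3,4)} : Finset (Sym2 (Fin 5))), c e' = c s(2,3) → e' = s(2,3) := by
          intro e' he'; fin_cases he' <;> intro hh <;> first | rfl | (exfalso; omega)
        rw [if_pos hPa, if_neg hPb, if_pos hPd, if_neg hPf] at hcard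
        right; left; rw [← hcard]; simp [Finset.card_insert_of_notMem, Finset.mem_insert, Finset.mem_singleton, Sym2.eq_iff]
      · by_cases h2 : c s(0,1) = c s(3,4)
        · -- c1 = c4 only
          have hPa : ¬ ∀ e' ∈ ({s(0,1), s(1,2), s(2,3), s(3,4)} : Finset (Sym2 (Fin 5))), c e' = c s(0,1) → e' = s(0,1) :=
            fun hP => absurd (hP s(3,4) (by decide) (by omega)) (by decide)
          have hPf : ¬ ∀ e' ∈ ({s(0,1), s(1,2), s(2,3), s(3,4)} : Finset (Sym2 (Fin 5))), c e' = c s(3,4) → e' = s(3,4) :=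
            fun hP => absurd (hP s(0,1) (by decide) (by omega)) (by decide)
          have hPb : ∀ e' ∈ ({s(0,1), s(1,2), s(2,3), s(3,4)} : Finset (Sym2 (Fin 5))), c e' = c s(1,2) → e' = s(1,2) := by
            intro e' he'; fin_cases he' <;> intro hh <;> first | rfl | (exfalso; omega)
          have hPd : ∀ e' ∈ ({s(0,1), s(1,2), s(2,3), s(3,4)} : Finset (Sym2 (Fin 5))), c e' = c s(2,3) → e' = s(2,3) := by
            intro e' he'; fin_cases he' <;> intro hh <;> first | rfl | (exfalso; omega)
          rw [if_neg hPa, if_pos hPb, if_pos hPd, if_neg hPf] at hcard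
          right; left; rw [← hcard]; simp [Finset.card_insert_of_notMem, Finset.mem_insert, Finset.mem_singleton, Sym2.eq_iff]
        · -- all distinct
          have hPa : ∀ e' ∈ ({s(0,1), s(1,2), s(2,3), s(3,4)} : Finset (Sym2 (Fin 5))), c e' = c s(0,1) → e' = s(0,1) := by
            intro e' he'; fin_cases he' <;> intro hh <;> first | rfl | (exfalso; omega)
          have hPb : ∀ e' ∈ ({s(0,1), s(1,2), s(2,3), s(3,4)} : Finset (Sym2 (Fin 5))), c e' = c s(1,2) → e' = s(1,2) := by
            intro e' he'; fin_cases he' <;> intro hh <;> first | rfl | (exfalso; omega)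
          have hPd : ∀ e' ∈ ({s(0,1), s(1,2), s(2,3), s(3,4)} : Finset (Sym2 (Fin 5))), c e' = c s(2,3) → e' = s(2,3) := by
            intro e' he'; fin_cases he' <;> intro hh <;> first | rfl | (exfalso; omega)
          have hPf : ∀ e' ∈ ({s(0,1), s(1,2), s(2,3), s(3,4)} : Finset (Sym2 (Fin 5))), c e' = c s(3,4) → e' = s(3,4) := by
            intro e' he'; fin_cases he' <;> intro hh <;> first | rfl | (exfalso; omega)
          rw [if_pos hPa, if_pos hPb, if_pos hPd, if_pos hPf] at hcard
          right; right; rw [← hcard]; simp [Finset.card_insert_of_notMem, Finset.mem_insert, Finset.mem_singleton, Sym2.eq_iff]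
    · rintro (rfl | rfl | rfl)
      · refine ⟨fun e => if e = s(0,1) then 1 else if e = s(1,2) then 2 else
          if e = s(2,3) then 1 else if e = s(3,4) then 2 else 0, ?_, ?_⟩
        · rw [isProper_iff _ _ _ edgeSet_P5]; decide
        · rw [uniqueEdges_eq_filter _ _ _ edgeSet_P5, Set.ncard_coe_finset]; decide
      · refine ⟨fun e => if e = s(0,1) then 1 else if e = s(1,2) then 2 else
          if e = s(2,3) then 1 else if e = s(3,4) then 3 else 0, ?_, ?_⟩
        · rw [isProper_iff _ _ _ edgeSet_P5]; decide
        · rw [uniqueEdges_eq_filter _ _ _ edgeSet_P5, Set.ncard_coe_finset]; decide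
      · refine ⟨fun e => if e = s(0,1) then 1 else if e = s(1,2) then 2 else
          if e = s(2,3) then 3 else if e = s(3,4) then 4 else 0, ?_, ?_⟩
        · rw [isProper_iff _ _ _ edgeSet_P5]; decide
        · rw [uniqueEdges_eq_filter _ _ _ edgeSet_P5, Set.ncard_coe_finset]; decide
end

section
/- Let r ≤ s be natural numbers and set j = s − r + 1. Then Spec(DS_{r,s}) = { j + 2l : 0 ≤ l ≤ r }; that is, the double star DS_{r,s} admits a proper edge coloring with exactly κ uniquely colored edges if and only if κ = s − r + 1 + 2l for some l with 0 ≤ l ≤ r. -/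
open SimpleGraph

namespace DSaux
variable (r s : ℕ)

def D : Sym2 (Fin 2 ⊕ Fin r ⊕ Fin s) := s(Sum.inl 0, Sum.inl 1)
def Ey (i : Fin r) : Sym2 (Fin 2 ⊕ Fin r ⊕ Fin s) := s(Sum.inl 0, Sum.inr (Sum.inl i))
def Ex (j : Fin s) : Sym2 (Fin 2 ⊕ Fin r ⊕ Fin s) := s(Sum.inl 1, Sum.inr (Sum.inr j))

lemma mem_edgeSet (e : Sym2 (Fin 2 ⊕ Fin r ⊕ Fin s)) :
    e ∈ (doubleStar r s).edgeSet ↔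
      e = D r s ∨ (∃ i, e = Ey r s i) ∨ (∃ j, e = Ex r s j) := by
  rw [doubleStar, edgeSet_fromEdgeSet, Set.mem_diff]
  constructor
  · rintro ⟨h, -⟩
    simp only [Set.mem_union, Set.mem_singleton_iff, Set.mem_setOf_eq] at h
    unfold D Ey Ex; tauto
  · rintro (rfl | ⟨i, rfl⟩ | ⟨j, rfl⟩) <;>
      simp [D, Ey, Ex, Set.mem_union, Sym2.isDiag_iff_proj_eq]

variable {r s}

lemma D_ne_Ey (i : Fin r) : D r s ≠ Ey r s i := by simp [D, Ey, Sym2.eq_iff]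
lemma D_ne_Ex (j : Fin s) : D r s ≠ Ex r s j := by simp [D, Ex, Sym2.eq_iff]
lemma Ey_ne_Ex (i : Fin r) (j : Fin s) : Ey r s i ≠ Ex r s j := by
  simp [Ey, Ex, Sym2.eq_iff]
lemma Ey_inj : Function.Injective (Ey r s) := by
  intro i i' h; simpa [Ey, Sym2.eq_iff] using h
lemma Ex_inj : Function.Injective (Ex r s) := by
  intro j j' h; simpa [Ex, Sym2.eq_iff] using h

variable {c : Sym2 (Fin 2 ⊕ Fin r ⊕ Fin s) → ℕ} (hc : IsProperEdgeColoring (doubleStar r s) c)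

lemma D_mem : D r s ∈ (doubleStar r s).edgeSet := (mem_edgeSet r s _).2 (Or.inl rfl)
lemma Ey_mem (i : Fin r) : Ey r s i ∈ (doubleStar r s).edgeSet :=
  (mem_edgeSet r s _).2 (Or.inr (Or.inl ⟨i, rfl⟩))
lemma Ex_mem (j : Fin s) : Ex r s j ∈ (doubleStar r s).edgeSet :=
  (mem_edgeSet r s _).2 (Or.inr (Or.inr ⟨j, rfl⟩))

include hc

lemma cD_ne_cEy (i : Fin r) : c (D r s) ≠ c (Ey r s i) :=
  hc _ D_mem _ (Ey_mem i) (D_ne_Ey i) ⟨Sum.inl 0, by simp [D, Ey]⟩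
lemma cD_ne_cEx (j : Fin s) : c (D r s) ≠ c (Ex r s j) :=
  hc _ D_mem _ (Ex_mem j) (D_ne_Ex j) ⟨Sum.inl 1, by simp [D, Ex]⟩
lemma cEy_ne_cEy {i i' : Fin r} (h : i ≠ i') : c (Ey r s i) ≠ c (Ey r s i') :=
  hc _ (Ey_mem i) _ (Ey_mem i') (fun he => h (Ey_inj he)) ⟨Sum.inl 0, by simp [Ey]⟩
lemma cEx_ne_cEx {j j' : Fin s} (h : j ≠ j') : c (Ex r s j) ≠ c (Ex r s j') :=
  hc _ (Ex_mem j) _ (Ex_mem j') (fun he => h (Ex_inj he)) ⟨Sum.inl 1, by simp [Ex]⟩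

lemma D_unique : D r s ∈ uniqueEdges (doubleStar r s) c := by
  refine ⟨D_mem, fun e' he' hce' => ?_⟩
  rcases (mem_edgeSet r s e').1 he' with rfl | ⟨i, rfl⟩ | ⟨j, rfl⟩
  · rfl
  · exact absurd hce'.symm (cD_ne_cEy hc i)
  · exact absurd hce'.symm (cD_ne_cEx hc j)

lemma not_unique_Ey (i : Fin r) :
    Ey r s i ∉ uniqueEdges (doubleStar r s) c ↔ ∃ j, c (Ex r s j) = c (Ey r s i) := by
  constructor
  · intro h
    simp only [uniqueEdges, Set.mem_setOf_eq, Ey_mem i, true_and, not_forall] at h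
    obtain ⟨e', he', hce', hne⟩ := h
    rcases (mem_edgeSet r s e').1 he' with rfl | ⟨i', rfl⟩ | ⟨j, rfl⟩
    · exact absurd hce' (cD_ne_cEy hc i)
    · rcases eq_or_ne i' i with rfl | hii
      · exact absurd rfl hne
      · exact absurd hce' (cEy_ne_cEy hc hii)
    · exact ⟨j, hce'⟩
  · rintro ⟨j, hj⟩ ⟨-, h⟩
    exact Ey_ne_Ex i j ((h _ (Ex_mem j) hj).symm)

lemma not_unique_Ex (j : Fin s) :
    Ex r s j ∉ uniqueEdges (doubleStar r s) c ↔ ∃ i, c (Ey r s i) = c (Ex r s j) := by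
  constructor
  · intro h
    simp only [uniqueEdges, Set.mem_setOf_eq, Ex_mem j, true_and, not_forall] at h
    obtain ⟨e', he', hce', hne⟩ := h
    rcases (mem_edgeSet r s e').1 he' with rfl | ⟨i, rfl⟩ | ⟨j', rfl⟩
    · exact absurd hce' (cD_ne_cEx hc j)
    · exact ⟨i, hce'⟩
    · rcases eq_or_ne j' j with rfl | hjj
      · exact absurd rfl hne
      · exact absurd hce' (cEx_ne_cEx hc hjj)
  · rintro ⟨i, hi⟩ ⟨-, h⟩
    exact Ey_ne_Ex i j (h _ (Ey_mem i) hi)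

lemma uniqueEdges_decomp :
    uniqueEdges (doubleStar r s) c =
      insert (D r s)
        ((Ey r s '' {i | Ey r s i ∈ uniqueEdges (doubleStar r s) c}) ∪
         (Ex r s '' {j | Ex r s j ∈ uniqueEdges (doubleStar r s) c})) := by
  ext e
  constructor
  · intro he
    rcases (mem_edgeSet r s e).1 he.1 with rfl | ⟨i, rfl⟩ | ⟨j, rfl⟩
    · exact Set.mem_insert _ _
    · exact Set.mem_insert_of_mem _ (Or.inl ⟨i, he, rfl⟩)
    · exact Set.mem_insert_of_mem _ (Or.inr ⟨j, he, rfl⟩)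
  · rintro (rfl | ⟨i, hi, rfl⟩ | ⟨j, hj, rfl⟩)
    · exact D_unique hc
    · exact hi
    · exact hj

omit hc in
lemma insert_ncard (A : Set (Fin r)) (B : Set (Fin s)) :
    (insert (D r s) ((Ey r s '' A) ∪ (Ex r s '' B))).ncard = 1 + A.ncard + B.ncard := by
  rw [Set.ncard_insert_of_notMem, Set.ncard_union_eq,
    Set.ncard_image_of_injective _ Ey_inj, Set.ncard_image_of_injective _ Ex_inj]
  · ring
  · rw [Set.disjoint_left]
    rintro e ⟨i, -, rfl⟩ ⟨j, -, he⟩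
    exact Ey_ne_Ex i j he.symm
  · rintro (⟨i, -, he⟩ | ⟨j, -, he⟩)
    · exact D_ne_Ey i he.symm
    · exact D_ne_Ex j he.symm

lemma uniqueEdges_ncard :
    (uniqueEdges (doubleStar r s) c).ncard =
      1 + ({i | Ey r s i ∈ uniqueEdges (doubleStar r s) c} : Set (Fin r)).ncard
        + ({j | Ex r s j ∈ uniqueEdges (doubleStar r s) c} : Set (Fin s)).ncard := by
  conv_lhs => rw [uniqueEdges_decomp hc]
  exact insert_ncard _ _

lemma nonunique_card_eq :
    ({i | Ey r s i ∈ uniqueEdges (doubleStar r s) c} : Set (Fin r))ᶜ.ncard =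
    ({j | Ex r s j ∈ uniqueEdges (doubleStar r s) c} : Set (Fin s))ᶜ.ncard := by
  have exJ : ∀ i : Fin r, Ey r s i ∉ uniqueEdges (doubleStar r s) c →
      ∃ j, c (Ex r s j) = c (Ey r s i) := fun i h => (not_unique_Ey hc i).1 h
  have exI : ∀ j : Fin s, Ex r s j ∉ uniqueEdges (doubleStar r s) c →
      ∃ i, c (Ey r s i) = c (Ex r s j) := fun j h => (not_unique_Ex hc j).1 h
  rw [← Nat.card_coe_set_eq, ← Nat.card_coe_set_eq]
  refine Nat.card_congr ⟨fun p => ⟨(exJ p.1 p.2).choose, ?_⟩,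
    fun q => ⟨(exI q.1 q.2).choose, ?_⟩, ?_, ?_⟩
  · exact (not_unique_Ex hc _).2 ⟨p.1, (exJ p.1 p.2).choose_spec.symm⟩
  · exact (not_unique_Ey hc _).2 ⟨q.1, (exI q.1 q.2).choose_spec.symm⟩
  · rintro ⟨i, hi⟩
    have hj : Ex r s (exJ i hi).choose ∉ uniqueEdges (doubleStar r s) c :=
      (not_unique_Ex hc _).2 ⟨i, (exJ i hi).choose_spec.symm⟩
    apply Subtype.ext
    simp only
    by_contra hne
    exact cEy_ne_cEy hc hne
      (((exI _ hj).choose_spec).trans ((exJ i hi).choose_spec))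
  · rintro ⟨j, hj⟩
    have hi : Ey r s (exI j hj).choose ∉ uniqueEdges (doubleStar r s) c :=
      (not_unique_Ey hc _).2 ⟨j, (exI j hj).choose_spec.symm⟩
    apply Subtype.ext
    simp only
    by_contra hne
    exact cEx_ne_cEx hc hne
      (((exJ _ hi).choose_spec).trans ((exI j hj).choose_spec))

omit hc

lemma ncard_le_set (n a : ℕ) (h : a ≤ n) :
    ({i : Fin n | a ≤ (i : ℕ)} : Set (Fin n)).ncard = n - a := by
  have heq : ({i : Fin n | a ≤ (i : ℕ)} : Set (Fin n)) =
      Set.range (fun j : Fin (n - a) => (⟨a + j.1, by omega⟩ : Fin n)) := by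
    ext i
    simp only [Set.mem_setOf_eq, Set.mem_range]
    constructor
    · intro hi
      exact ⟨⟨i.1 - a, by omega⟩, by apply Fin.ext; simp; omega⟩
    · rintro ⟨j, rfl⟩; simp
  rw [heq, ← Nat.card_coe_set_eq, Nat.card_range_of_injective, Nat.card_eq_fintype_card,
    Fintype.card_fin]
  intro j j' hjj
  have := congrArg Fin.val hjj
  simp only [Fin.val_mk] at this
  apply Fin.ext
  omega

variable (r s) in
def g (t : ℕ) : (Fin 2 ⊕ Fin r ⊕ Fin s) → ℕ
  | Sum.inl _ => 0
  | Sum.inr (Sum.inl i) => i + 1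
  | Sum.inr (Sum.inr j) => if (j : ℕ) < t then j + 1 else r + 1 + j

variable (r s) in
noncomputable def col (t : ℕ) : Sym2 (Fin 2 ⊕ Fin r ⊕ Fin s) → ℕ :=
  Sym2.lift ⟨fun a b => g r s t a + g r s t b, fun a b => add_comm _ _⟩

lemma col_D (t : ℕ) : col r s t (D r s) = 0 := by simp [col, D, g]
lemma col_Ey (t : ℕ) (i : Fin r) : col r s t (Ey r s i) = i + 1 := by simp [col, Ey, g]
lemma col_Ex (t : ℕ) (j : Fin s) :
    col r s t (Ex r s j) = if (j : ℕ) < t then (j : ℕ) + 1 else r + 1 + j := by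
  simp [col, Ex, g]

lemma col_proper (t : ℕ) (ht : t ≤ r) : IsProperEdgeColoring (doubleStar r s) (col r s t) := by
  intro e₁ he₁ e₂ he₂ hne hsh
  rcases (mem_edgeSet r s e₁).1 he₁ with rfl | ⟨i, rfl⟩ | ⟨j, rfl⟩ <;>
    rcases (mem_edgeSet r s e₂).1 he₂ with rfl | ⟨i', rfl⟩ | ⟨j', rfl⟩
  · exact absurd rfl hne
  · rw [col_D, col_Ey]; omega
  · rw [col_D, col_Ex]; split <;> omega
  · rw [col_D, col_Ey]; omega
  · have hii : i ≠ i' := fun h => hne (congrArg _ h)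
    rw [col_Ey, col_Ey]
    have : (i : ℕ) ≠ (i' : ℕ) := fun h => hii (Fin.ext h)
    omega
  · obtain ⟨v, hv1, hv2⟩ := hsh
    rw [Ey, Sym2.mem_iff] at hv1
    rw [Ex, Sym2.mem_iff] at hv2
    rcases hv1 with rfl | rfl <;> rcases hv2 with h | h <;> simp_all
  · rw [col_D, col_Ex]; split <;> omega
  · obtain ⟨v, hv1, hv2⟩ := hsh
    rw [Ex, Sym2.mem_iff] at hv1
    rw [Ey, Sym2.mem_iff] at hv2
    rcases hv1 with rfl | rfl <;> rcases hv2 with h | h <;> simp_all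
  · have hjj : j ≠ j' := fun h => hne (congrArg _ h)
    have : (j : ℕ) ≠ (j' : ℕ) := fun h => hjj (Fin.ext h)
    have hj : (j : ℕ) < s := j.2
    have hj' : (j' : ℕ) < s := j'.2
    rw [col_Ex, col_Ex]
    split <;> split <;> omega

lemma col_uniqueEy_set {t : ℕ} (ht : t ≤ r) (hrs : r ≤ s) :
    {i : Fin r | Ey r s i ∈ uniqueEdges (doubleStar r s) (col r s t)} =
      {i : Fin r | t ≤ (i : ℕ)} := by
  ext i
  simp only [Set.mem_setOf_eq]
  rw [← not_not (a := Ey r s i ∈ _), not_unique_Ey (col_proper t ht)]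
  constructor
  · intro h
    by_contra hlt
    push_neg at hlt
    exact h ⟨⟨i, lt_of_lt_of_le (lt_of_lt_of_le hlt ht) hrs⟩, by rw [col_Ex, col_Ey]; simp [hlt]⟩
  · rintro hti ⟨j, hj⟩
    rw [col_Ex, col_Ey] at hj
    have := i.2
    split at hj <;> omega

lemma col_uniqueEx_set {t : ℕ} (ht : t ≤ r) :
    {j : Fin s | Ex r s j ∈ uniqueEdges (doubleStar r s) (col r s t)} =
      {j : Fin s | t ≤ (j : ℕ)} := by
  ext j
  simp only [Set.mem_setOf_eq]
  rw [← not_not (a := Ex r s j ∈ _), not_unique_Ex (col_proper t ht)]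
  constructor
  · intro h
    by_contra hlt
    push_neg at hlt
    exact h ⟨⟨j, lt_of_lt_of_le hlt ht⟩, by rw [col_Ex, col_Ey]; simp [hlt]⟩
  · rintro htj ⟨i, hi⟩
    rw [col_Ex, col_Ey] at hi
    have := i.2
    split at hi <;> omega

lemma col_ncard {t : ℕ} (ht : t ≤ r) (hrs : r ≤ s) :
    (uniqueEdges (doubleStar r s) (col r s t)).ncard = 1 + (r - t) + (s - t) := by
  rw [uniqueEdges_ncard (col_proper t ht), col_uniqueEy_set ht hrs, col_uniqueEx_set ht,
    ncard_le_set r t ht, ncard_le_set s t (ht.trans hrs)]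

end DSaux

open DSaux in
/-- For `r ≤ s`, `Spec(DS_{r,s}) = {(s − r + 1) + 2l : 0 ≤ l ≤ r}`. -/
theorem doubleStar_spectrum (r s : ℕ) (hrs : r ≤ s) :
    Spec (doubleStar r s) = {κ : ℕ | ∃ l : ℕ, l ≤ r ∧ κ = s - r + 1 + 2 * l} := by
  ext k
  simp only [Spec, Set.mem_setOf_eq]
  constructor
  · rintro ⟨c, hc, rfl⟩
    have h1 := uniqueEdges_ncard hc
    have h2 := nonunique_card_eq hc
    have hA := Set.ncard_add_ncard_compl
      ({i : Fin r | Ey r s i ∈ uniqueEdges (doubleStar r s) c})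
    have hB := Set.ncard_add_ncard_compl
      ({j : Fin s | Ex r s j ∈ uniqueEdges (doubleStar r s) c})
    rw [Nat.card_eq_fintype_card, Fintype.card_fin] at hA hB
    exact ⟨({i : Fin r | Ey r s i ∈ uniqueEdges (doubleStar r s) c}).ncard, by omega, by omega⟩
  · rintro ⟨l, hl, rfl⟩
    refine ⟨col r s (r - l), col_proper _ (by omega), ?_⟩
    rw [col_ncard (by omega : r - l ≤ r) hrs]
    omega
end

section
/- Let r ≤ s and 0 ≤ l ≤ r be natural numbers and set j = s − r + 1. Every proper edge coloring of the double star DS_{r,s+l} contains a copy of DS_{r,s} having at least j + 2l uniquely colored edges (i.e., at least j + 2l edges of the copy receive colors appearing on no other edge of the copy). -/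
open SimpleGraph

section Aux
open Sum

/-- Enumeration of the edges of the double star. -/
def dsE (a b : ℕ) : Option (Fin a ⊕ Fin b) → Sym2 (Fin 2 ⊕ Fin a ⊕ Fin b)
  | none => s(Sum.inl 0, Sum.inl 1)
  | some (Sum.inl i) => s(Sum.inl 0, Sum.inr (Sum.inl i))
  | some (Sum.inr j) => s(Sum.inl 1, Sum.inr (Sum.inr j))

lemma dsE_injective (a b : ℕ) : Function.Injective (dsE a b) := by
  rintro (_ | (i | j)) (_ | (i' | j')) h <;>
    simp [dsE, Sym2.eq_iff] at h <;> simp [h]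

lemma ds_edgeSet_eq_range (a b : ℕ) :
    (doubleStar a b).edgeSet = Set.range (dsE a b) := by
  rw [doubleStar, SimpleGraph.edgeSet_fromEdgeSet]
  ext e
  simp only [Set.mem_diff, Set.mem_union, Set.mem_singleton_iff, Set.mem_setOf_eq,
    Set.mem_range]
  constructor
  · rintro ⟨((rfl | ⟨i, rfl⟩) | ⟨j, rfl⟩), -⟩
    · exact ⟨none, rfl⟩
    · exact ⟨some (Sum.inl i), rfl⟩
    · exact ⟨some (Sum.inr j), rfl⟩
  · rintro ⟨(_ | (i | j)), rfl⟩
    · exact ⟨Or.inl (Or.inl rfl), by simp [dsE]⟩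
    · exact ⟨Or.inl (Or.inr ⟨i, rfl⟩), by simp [dsE]⟩
    · exact ⟨Or.inr ⟨j, rfl⟩, by simp [dsE]⟩

lemma copyUniqueCount_ds (r s : ℕ) {V : Type*} (c : Sym2 V → ℕ)
    (f : (Fin 2 ⊕ Fin r ⊕ Fin s) → V) :
    copyUniqueCount (doubleStar r s) c f =
      {a : Option (Fin r ⊕ Fin s) |
        ∀ b, c ((dsE r s b).map f) = c ((dsE r s a).map f) → b = a}.ncard := by
  have hset : {e | e ∈ (doubleStar r s).edgeSet ∧
      ∀ e' ∈ (doubleStar r s).edgeSet, c (e'.map f) = c (e.map f) → e' = e} =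
      (dsE r s) '' {a : Option (Fin r ⊕ Fin s) |
        ∀ b, c ((dsE r s b).map f) = c ((dsE r s a).map f) → b = a} := by
    ext e
    constructor
    · rintro ⟨he, hu⟩
      rw [ds_edgeSet_eq_range] at he hu
      obtain ⟨a, rfl⟩ := he
      refine ⟨a, fun b hb => dsE_injective r s (hu _ ⟨b, rfl⟩ hb), rfl⟩
    · rintro ⟨a, ha, rfl⟩
      rw [ds_edgeSet_eq_range]
      refine ⟨⟨a, rfl⟩, ?_⟩
      rintro e' he' hce'
      obtain ⟨b, rfl⟩ := he'
      rw [ha b hce']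
  rw [copyUniqueCount, hset, Set.ncard_image_of_injective _ (dsE_injective r s)]

end Aux

section Aux2
open Sum

lemma ds_mem_center {a b : ℕ} :
    s(Sum.inl 0, Sum.inl 1) ∈ (doubleStar a b).edgeSet :=
  (ds_edgeSet_eq_range a b).symm ▸ ⟨none, rfl⟩

lemma ds_mem_y {a b : ℕ} (i : Fin a) :
    s((Sum.inl 0 : Fin 2 ⊕ Fin a ⊕ Fin b), Sum.inr (Sum.inl i)) ∈ (doubleStar a b).edgeSet :=
  (ds_edgeSet_eq_range a b).symm ▸ ⟨some (Sum.inl i), rfl⟩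

lemma ds_mem_x {a b : ℕ} (j : Fin b) :
    s((Sum.inl 1 : Fin 2 ⊕ Fin a ⊕ Fin b), Sum.inr (Sum.inr j)) ∈ (doubleStar a b).edgeSet :=
  (ds_edgeSet_eq_range a b).symm ▸ ⟨some (Sum.inr j), rfl⟩

end Aux2

/-- For `r ≤ s` and `l ≤ r`, every proper edge coloring of `DS_{r,s+l}`
contains a copy of `DS_{r,s}` with at least `(s − r + 1) + 2l` uniquely colored
edges. -/
theorem doubleStar_aug_kUnique (r s l : ℕ) (hrs : r ≤ s) (hl : l ≤ r)
    (c : Sym2 (Fin 2 ⊕ Fin r ⊕ Fin (s + l)) → ℕ)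
    (hc : IsProperEdgeColoring (doubleStar r (s + l)) c) :
    ContainsKUniqueCopy (doubleStar r s) (doubleStar r (s + l)) c
      (s - r + 1 + 2 * l) := by
  classical
  set cY : Fin r → ℕ := fun i => c s(Sum.inl 0, Sum.inr (Sum.inl i)) with hcY
  set cX : Fin (s + l) → ℕ := fun j => c s(Sum.inl 1, Sum.inr (Sum.inr j)) with hcX
  set c0 : ℕ := c s(Sum.inl 0, Sum.inl 1) with hc0
  -- proper coloring facts
  have hCY : ∀ i : Fin r, c0 ≠ cY i := fun i =>
    hc _ ds_mem_center _ (ds_mem_y i) (by simp [Sym2.eq_iff])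
      ⟨Sum.inl 0, by simp, by simp⟩
  have hCX : ∀ j : Fin (s + l), c0 ≠ cX j := fun j =>
    hc _ ds_mem_center _ (ds_mem_x j) (by simp [Sym2.eq_iff])
      ⟨Sum.inl 1, by simp, by simp⟩
  have hYY : ∀ i₁ i₂ : Fin r, cY i₁ = cY i₂ → i₁ = i₂ := by
    intro i₁ i₂ h
    by_contra hne
    exact hc _ (ds_mem_y i₁) _ (ds_mem_y i₂)
      (by simp [Sym2.eq_iff, hne]) ⟨Sum.inl 0, by simp, by simp⟩ h
  have hXX : ∀ j₁ j₂ : Fin (s + l), cX j₁ = cX j₂ → j₁ = j₂ := by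
    intro j₁ j₂ h
    by_contra hne
    exact hc _ (ds_mem_x j₁) _ (ds_mem_x j₂)
      (by simp [Sym2.eq_iff, hne]) ⟨Sum.inl 1, by simp, by simp⟩ h
  -- the bad set B
  set B : Finset (Fin (s + l)) :=
    Finset.univ.filter (fun j => ∃ i : Fin r, cX j = cY i) with hB
  have hBcard : B.card ≤ r := by
    have h1 : (B.image cX).card = B.card :=
      Finset.card_image_of_injOn (fun x _ y _ h => hXX x y h)
    have h2 : B.image cX ⊆ Finset.univ.image cY := by
      intro n hn
      simp only [Finset.mem_image] at hn ⊢
      obtain ⟨j, hj, rfl⟩ := hn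
      obtain ⟨i, hi⟩ := (Finset.mem_filter.mp hj).2
      exact ⟨i, Finset.mem_univ _, hi.symm⟩
    calc B.card = (B.image cX).card := h1.symm
      _ ≤ (Finset.univ.image cY).card := Finset.card_le_card h2
      _ ≤ (Finset.univ : Finset (Fin r)).card := Finset.card_image_le
      _ = r := by simp
  -- a set D of l vertices to delete, covering as much of B as possible
  obtain ⟨D, hDcard, hBD⟩ :
      ∃ D : Finset (Fin (s + l)), D.card = l ∧ (B \ D).card ≤ r - l := by
    by_cases hlB : l ≤ B.card
    · obtain ⟨D, hDB, hDcard⟩ := Finset.exists_subset_card_eq (s := B) hlB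
      refine ⟨D, hDcard, ?_⟩
      rw [Finset.card_sdiff_of_subset hDB, hDcard]
      omega
    · obtain ⟨D, hBsub, hDcard⟩ := Finset.exists_superset_card_eq
        (s := B) (n := l) (by omega) (by simp)
      refine ⟨D, hDcard, ?_⟩
      rw [Finset.sdiff_eq_empty_iff_subset.mpr hBsub]
      simp
  -- the injection φ : Fin s → Fin (s+l) avoiding D
  have hDc : Dᶜ.card = s := by
    rw [Finset.card_compl, hDcard]
    simp
  set eq := Dᶜ.equivFinOfCardEq hDc with heq
  set φ : Fin s → Fin (s + l) := fun j => (eq.symm j : Fin (s + l)) with hφ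
  have hφinj : Function.Injective φ := fun j₁ j₂ h => by
    have : eq.symm j₁ = eq.symm j₂ := Subtype.ext h
    simpa using congrArg eq this
  have hφD : ∀ j, φ j ∉ D := fun j => Finset.mem_compl.mp (eq.symm j).2
  -- the copy map
  set f : (Fin 2 ⊕ Fin r ⊕ Fin s) → (Fin 2 ⊕ Fin r ⊕ Fin (s + l)) :=
    Sum.map id (Sum.map id φ) with hf
  have hfinj : Function.Injective f :=
    Function.Injective.sumMap (fun _ _ h => h)
      (Function.Injective.sumMap (fun _ _ h => h) hφinj)
  have hcopy : IsCopy (doubleStar r s) (doubleStar r (s + l)) f := by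
    refine ⟨hfinj, fun u v huv => ?_⟩
    have hne := huv.ne
    rw [doubleStar, SimpleGraph.fromEdgeSet_adj] at huv ⊢
    refine ⟨?_, fun h => hne (hfinj h)⟩
    obtain ⟨hmem, -⟩ := huv
    simp only [Set.mem_union, Set.mem_singleton_iff, Set.mem_setOf_eq] at hmem ⊢
    rcases hmem with ((h | ⟨i, h⟩) | ⟨j, h⟩)
    · left; left
      rw [Sym2.eq_iff] at h
      rcases h with ⟨rfl, rfl⟩ | ⟨rfl, rfl⟩ <;> simp [hf, Sym2.eq_iff]
    · left; right
      rw [Sym2.eq_iff] at h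
      rcases h with ⟨rfl, rfl⟩ | ⟨rfl, rfl⟩ <;>
        exact ⟨i, by simp [hf, Sym2.eq_iff]⟩
    · right
      rw [Sym2.eq_iff] at h
      rcases h with ⟨rfl, rfl⟩ | ⟨rfl, rfl⟩ <;>
        exact ⟨φ j, by simp [hf, Sym2.eq_iff]⟩
  refine ⟨f, hcopy, ?_⟩
  -- the color function on edges of the copy
  set g : Option (Fin r ⊕ Fin s) → ℕ := fun a => c ((dsE r s a).map f) with hg
  have hg0 : g none = c0 := by simp [hg, dsE, hf, hc0]
  have hgY : ∀ i, g (some (Sum.inl i)) = cY i := by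
    intro i; simp [hg, dsE, hf, hcY]
  have hgX : ∀ j, g (some (Sum.inr j)) = cX (φ j) := by
    intro j; simp [hg, dsE, hf, hcX]
  set P : Option (Fin r ⊕ Fin s) → Prop := fun a => ∀ b, g b = g a → b = a with hP
  -- rewrite the count
  have hcount : copyUniqueCount (doubleStar r s) c f =
      (Finset.univ.filter P).card := by
    rw [copyUniqueCount_ds, Set.ncard_eq_toFinset_card', Set.toFinset_setOf]
  -- bad indices among the chosen leaves
  set badJ : Finset (Fin s) :=
    Finset.univ.filter (fun j => ∃ i : Fin r, g (some (Sum.inr j)) = g (some (Sum.inl i)))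
    with hbadJ
  have hbadJcard : badJ.card ≤ r - l := by
    have hmapsto : ∀ j ∈ badJ, φ j ∈ B \ D := by
      intro j hj
      obtain ⟨i, hi⟩ := (Finset.mem_filter.mp hj).2
      rw [hgX, hgY] at hi
      exact Finset.mem_sdiff.mpr ⟨Finset.mem_filter.mpr ⟨Finset.mem_univ _, ⟨i, hi⟩⟩, hφD j⟩
    calc badJ.card ≤ (B \ D).card :=
          Finset.card_le_card_of_injOn φ hmapsto (fun x _ y _ h => hφinj h)
      _ ≤ r - l := hBD
  -- `none` is uniquely colored
  have hPnone : P none := by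
    rintro (_ | (i | j)) hb
    · rfl
    · rw [hgY, hg0] at hb
      exact absurd hb.symm (hCY i)
    · rw [hgX, hg0] at hb
      exact absurd hb.symm (hCX (φ j))
  -- bound on the non-unique edges
  have hnonU : (Finset.univ.filter (fun a => ¬ P a)).card ≤ 2 * (r - l) := by
    set nonU := Finset.univ.filter (fun a => ¬ P a) with hnonUdef
    have hwit : ∀ a ∈ nonU, ∃ b, g b = g a ∧ b ≠ a := by
      intro a ha
      have h := (Finset.mem_filter.mp ha).2
      simp only [hP, not_forall] at h
      obtain ⟨b, hb1, hb2⟩ := h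
      exact ⟨b, hb1, hb2⟩
    set A1 := nonU.filter (fun a => ∃ i : Fin r, a = some (Sum.inl i)) with hA1
    set A2 := nonU.filter (fun a => ∃ j : Fin s, a = some (Sum.inr j)) with hA2
    have hsplit : nonU ⊆ A1 ∪ A2 := by
      intro a ha
      rcases a with (_ | (i | j))
      · exact absurd (Finset.mem_filter.mp ha).2 (not_not.mpr hPnone)
      · exact Finset.mem_union_left _ (Finset.mem_filter.mpr ⟨ha, i, rfl⟩)
      · exact Finset.mem_union_right _ (Finset.mem_filter.mpr ⟨ha, j, rfl⟩)
    have hA2sub : A2 ⊆ badJ.image (fun j => some (Sum.inr j)) := by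
      intro a ha
      obtain ⟨hanonU, j, rfl⟩ := Finset.mem_filter.mp ha
      obtain ⟨b, hgb, hbne⟩ := hwit _ hanonU
      refine Finset.mem_image.mpr ⟨j, ?_, rfl⟩
      rcases b with (_ | (i | j'))
      · rw [hg0, hgX] at hgb
        exact absurd hgb (hCX (φ j))
      · rw [hgY, hgX] at hgb
        exact Finset.mem_filter.mpr ⟨Finset.mem_univ _, i, by rw [hgX, hgY]; exact hgb.symm⟩
      · rw [hgX, hgX] at hgb
        exact absurd (congrArg (some ∘ Sum.inr) (hφinj (hXX _ _ hgb))) hbne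
    have hA1g : (A1.image g).card = A1.card := by
      refine Finset.card_image_of_injOn ?_
      intro a ha b hb hab
      obtain ⟨-, i, rfl⟩ := Finset.mem_filter.mp ha
      obtain ⟨-, i', rfl⟩ := Finset.mem_filter.mp hb
      rw [hgY, hgY] at hab
      rw [hYY i i' hab]
    have hA1sub : A1.image g ⊆ badJ.image (fun j => g (some (Sum.inr j))) := by
      intro n hn
      obtain ⟨a, ha, rfl⟩ := Finset.mem_image.mp hn
      obtain ⟨hanonU, i, rfl⟩ := Finset.mem_filter.mp ha
      obtain ⟨b, hgb, hbne⟩ := hwit _ hanonU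
      rcases b with (_ | (i' | j))
      · rw [hg0, hgY] at hgb
        exact absurd hgb (hCY i)
      · rw [hgY, hgY] at hgb
        exact absurd (congrArg (some ∘ Sum.inl) (hYY _ _ hgb)) hbne
      · refine Finset.mem_image.mpr ⟨j, ?_, hgb⟩
        exact Finset.mem_filter.mpr ⟨Finset.mem_univ _, i, by rw [hgX, hgY] at hgb ⊢; exact hgb⟩
    calc nonU.card ≤ (A1 ∪ A2).card := Finset.card_le_card hsplit
      _ ≤ A1.card + A2.card := Finset.card_union_le _ _
      _ ≤ badJ.card + badJ.card := by
          refine Nat.add_le_add ?_ ?_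
          · rw [← hA1g]
            exact le_trans (Finset.card_le_card hA1sub) Finset.card_image_le
          · exact le_trans (Finset.card_le_card hA2sub) Finset.card_image_le
      _ ≤ 2 * (r - l) := by omega
  -- conclude
  rw [hcount]
  have hsum := Finset.card_filter_add_card_filter_not
    (s := (Finset.univ : Finset (Option (Fin r ⊕ Fin s)))) P
  have hcardT : (Finset.univ : Finset (Option (Fin r ⊕ Fin s))).card = r + s + 1 := by
    simp [Fintype.card_option, Fintype.card_sum]
  omega
end

section
/- Let r ≤ s and 0 ≤ l ≤ r be natural numbers and set j = s − r + 1. If a simple graph G has a proper edge coloring using at most s + l colors, then every copy of the double star DS_{r,s} in G has at most j + 2l − 2 uniquely colored edges; in particular such a coloring contains no (j+2l)-unique copy of DS_{r,s}. -/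
open SimpleGraph

section AuxDS
open Finset

variable (r s : ℕ)

/-- edges at `y` (including the central edge). -/
noncomputable def dsY : Finset (Sym2 (Fin 2 ⊕ Fin r ⊕ Fin s)) :=
  insert s(Sum.inl 0, Sum.inl 1)
    (Finset.univ.image fun i : Fin r => s(Sum.inl 0, Sum.inr (Sum.inl i)))

/-- edges at `x` (including the central edge). -/
noncomputable def dsX : Finset (Sym2 (Fin 2 ⊕ Fin r ⊕ Fin s)) :=
  insert s(Sum.inl 0, Sum.inl 1)
    (Finset.univ.image fun j : Fin s => s(Sum.inl 1, Sum.inr (Sum.inr j)))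

lemma card_dsY : (dsY r s).card = r + 1 := by
  have hinj : Function.Injective fun i : Fin r =>
      (s(Sum.inl 0, Sum.inr (Sum.inl i)) : Sym2 (Fin 2 ⊕ Fin r ⊕ Fin s)) := by
    intro i j h; simpa using h
  have hnm : (s(Sum.inl 0, Sum.inl 1) : Sym2 (Fin 2 ⊕ Fin r ⊕ Fin s)) ∉
      Finset.univ.image fun i : Fin r => s(Sum.inl 0, Sum.inr (Sum.inl i)) := by
    simp [Sym2.eq_iff]
  rw [dsY, card_insert_of_notMem hnm, card_image_of_injective _ hinj, card_univ,
    Fintype.card_fin]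

lemma card_dsX : (dsX r s).card = s + 1 := by
  have hinj : Function.Injective fun j : Fin s =>
      (s(Sum.inl 1, Sum.inr (Sum.inr j)) : Sym2 (Fin 2 ⊕ Fin r ⊕ Fin s)) := by
    intro i j h; simpa using h
  have hnm : (s(Sum.inl 0, Sum.inl 1) : Sym2 (Fin 2 ⊕ Fin r ⊕ Fin s)) ∉
      Finset.univ.image fun j : Fin s => s(Sum.inl 1, Sum.inr (Sum.inr j)) := by
    simp [Sym2.eq_iff]
  rw [dsX, card_insert_of_notMem hnm, card_image_of_injective _ hinj, card_univ,
    Fintype.card_fin]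

lemma dsY_inter_dsX {e : Sym2 (Fin 2 ⊕ Fin r ⊕ Fin s)}
    (h1 : e ∈ dsY r s) (h2 : e ∈ dsX r s) : e = s(Sum.inl 0, Sum.inl 1) := by
  simp only [dsY, dsX, mem_insert, mem_image, mem_univ, true_and] at h1 h2
  rcases h1 with h1 | ⟨i, rfl⟩
  · exact h1
  · rcases h2 with h2 | ⟨j, h2⟩
    · simp [Sym2.eq_iff] at h2
    · simp [Sym2.eq_iff] at h2

lemma doubleStar_edgeSet_eq :
    (doubleStar r s).edgeSet = ↑(dsY r s ∪ dsX r s) := by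
  ext e
  simp only [doubleStar, edgeSet_fromEdgeSet, Set.mem_diff, Set.mem_union,
    Set.mem_singleton_iff, Set.mem_setOf_eq, coe_union, Set.mem_union, dsY, dsX,
    coe_insert, Set.mem_insert_iff, coe_image, Set.mem_image, mem_coe, mem_univ,
    Finset.mem_image, true_and]
  constructor
  · rintro ⟨(h | ⟨i, rfl⟩) | ⟨j, rfl⟩, _⟩
    · exact Or.inl (Or.inl h)
    · exact Or.inl (Or.inr ⟨_, rfl⟩)
    · exact Or.inr (Or.inr ⟨_, rfl⟩)
  · rintro ((h | ⟨i, rfl⟩) | (h | ⟨j, rfl⟩))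
    · subst h
      exact ⟨Or.inl (Or.inl rfl), by simp [Sym2.mk_isDiag_iff]⟩
    · exact ⟨Or.inl (Or.inr ⟨_, rfl⟩), by simp [Sym2.mk_isDiag_iff]⟩
    · subst h
      exact ⟨Or.inl (Or.inl rfl), by simp [Sym2.mk_isDiag_iff]⟩
    · exact ⟨Or.inr ⟨_, rfl⟩, by simp [Sym2.mk_isDiag_iff]⟩

lemma mem_dsY_left {e : Sym2 (Fin 2 ⊕ Fin r ⊕ Fin s)} (h : e ∈ dsY r s) :
    (Sum.inl 0 : Fin 2 ⊕ Fin r ⊕ Fin s) ∈ e := by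
  simp only [dsY, mem_insert, mem_image, mem_univ, true_and] at h
  rcases h with rfl | ⟨i, rfl⟩ <;> simp

lemma mem_dsX_left {e : Sym2 (Fin 2 ⊕ Fin r ⊕ Fin s)} (h : e ∈ dsX r s) :
    (Sum.inl 1 : Fin 2 ⊕ Fin r ⊕ Fin s) ∈ e := by
  simp only [dsX, mem_insert, mem_image, mem_univ, true_and] at h
  rcases h with rfl | ⟨j, rfl⟩ <;> simp

end AuxDS

/-- For `r ≤ s` and `l ≤ r`, if `G` has a proper edge coloring using at
most `s + l` colors, then every copy of `DS_{r,s}` in `G` has at most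
`(s − r + 1) + 2l − 2` uniquely colored edges; in particular the coloring contains
no `(j+2l)`-unique copy of `DS_{r,s}`. -/
theorem doubleStar_few_colors_not_kUnique {V : Type*} (r s l : ℕ)
    (hrs : r ≤ s) (hl : l ≤ r) (G : SimpleGraph V) (c : Sym2 V → ℕ)
    (hc : IsProperEdgeColoring G c)
    (hcolors : ∃ t : Finset ℕ, t.card ≤ s + l ∧ ∀ e ∈ G.edgeSet, c e ∈ t) :
    (∀ f : Fin 2 ⊕ Fin r ⊕ Fin s → V, IsCopy (doubleStar r s) G f →
      copyUniqueCount (doubleStar r s) c f + 2 ≤ s - r + 1 + 2 * l) ∧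
    ¬ ContainsKUniqueCopy (doubleStar r s) G c (s - r + 1 + 2 * l) := by
  classical
  obtain ⟨t, htcard, htmem⟩ := hcolors
  have main : ∀ f : Fin 2 ⊕ Fin r ⊕ Fin s → V, IsCopy (doubleStar r s) G f →
      copyUniqueCount (doubleStar r s) c f + 2 ≤ s - r + 1 + 2 * l := by
    intro f hcopy
    let W := Fin 2 ⊕ Fin r ⊕ Fin s
    set g : Sym2 W → ℕ := fun e => c (e.map f) with hg
    set e₀ : Sym2 W := s(Sum.inl 0, Sum.inl 1) with he₀
    have hES := doubleStar_edgeSet_eq r s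
    have hedge : ∀ e ∈ dsY r s ∪ dsX r s, e.map f ∈ G.edgeSet := by
      intro e he
      have : e ∈ (doubleStar r s).edgeSet := by rw [hES]; exact_mod_cast he
      exact SimpleGraph.Hom.map_mem_edgeSet ⟨f, fun hadj => hcopy.2 _ _ hadj⟩ this
    have hinjm : Function.Injective (Sym2.map f) := Sym2.map.injective hcopy.1
    -- injectivity of g on dsY and dsX
    have hinjY : Set.InjOn g ↑(dsY r s) := by
      intro e₁ h1 e₂ h2 heq
      by_contra hne
      exact hc _ (hedge _ (Finset.mem_union_left _ h1)) _
        (hedge _ (Finset.mem_union_left _ h2))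
        (fun h => hne (hinjm h))
        ⟨f (Sum.inl 0), Sym2.mem_map.2 ⟨_, mem_dsY_left r s h1, rfl⟩,
          Sym2.mem_map.2 ⟨_, mem_dsY_left r s h2, rfl⟩⟩ heq
    have hinjX : Set.InjOn g ↑(dsX r s) := by
      intro e₁ h1 e₂ h2 heq
      by_contra hne
      exact hc _ (hedge _ (Finset.mem_union_right _ h1)) _
        (hedge _ (Finset.mem_union_right _ h2))
        (fun h => hne (hinjm h))
        ⟨f (Sum.inl 1), Sym2.mem_map.2 ⟨_, mem_dsX_left r s h1, rfl⟩,
          Sym2.mem_map.2 ⟨_, mem_dsX_left r s h2, rfl⟩⟩ heq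
    -- color sets
    set Iset : Finset ℕ := (dsY r s).image g ∩ (dsX r s).image g with hIset
    have hYt : (dsY r s).image g ∪ (dsX r s).image g ⊆ t := by
      intro a ha
      rcases Finset.mem_union.1 ha with h | h <;>
        obtain ⟨e, he, rfl⟩ := Finset.mem_image.1 h
      · exact htmem _ (hedge _ (Finset.mem_union_left _ he))
      · exact htmem _ (hedge _ (Finset.mem_union_right _ he))
    have hIcard : r + 2 ≤ l + Iset.card := by
      have h1 := Finset.card_union_add_card_inter ((dsY r s).image g) ((dsX r s).image g)
      have h2 : ((dsY r s).image g ∪ (dsX r s).image g).card ≤ s + l :=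
        le_trans (Finset.card_le_card hYt) htcard
      rw [Finset.card_image_of_injOn hinjY, Finset.card_image_of_injOn hinjX,
        card_dsY, card_dsX, ← hIset] at h1
      omega
    -- the two "private color" filters
    set Fy : Finset (Sym2 W) := (dsY r s).filter (fun e => g e ∉ (dsX r s).image g) with hFy
    set Fx : Finset (Sym2 W) := (dsX r s).filter (fun e => g e ∉ (dsY r s).image g) with hFx
    have hFycard : Fy.card + Iset.card = r + 1 := by
      have hsplit := Finset.card_filter_add_card_filter_not
        (s := dsY r s) (fun e => g e ∈ (dsX r s).image g)
      have himg : ((dsY r s).filter (fun e => g e ∈ (dsX r s).image g)).image g = Iset := by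
        ext a
        simp only [Finset.mem_image, Finset.mem_filter, hIset, Finset.mem_inter]
        constructor
        · rintro ⟨e, ⟨he, hmem⟩, rfl⟩
          exact ⟨⟨e, he, rfl⟩, hmem⟩
        · rintro ⟨ha, hb⟩
          obtain ⟨e, he, rfl⟩ := ha
          exact ⟨e, ⟨he, hb⟩, rfl⟩
      have hcardf : ((dsY r s).filter (fun e => g e ∈ (dsX r s).image g)).card = Iset.card := by
        rw [← himg]
        exact (Finset.card_image_of_injOn
          (hinjY.mono (by intro x hx; exact (Finset.mem_filter.1 hx).1))).symm
      rw [hcardf] at hsplit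
      rw [← card_dsY r s, ← hsplit]
      ring
    have hFxcard : Fx.card + Iset.card = s + 1 := by
      have hsplit := Finset.card_filter_add_card_filter_not
        (s := dsX r s) (fun e => g e ∈ (dsY r s).image g)
      have himg : ((dsX r s).filter (fun e => g e ∈ (dsY r s).image g)).image g = Iset := by
        ext a
        simp only [Finset.mem_image, Finset.mem_filter, hIset, Finset.mem_inter]
        constructor
        · rintro ⟨e, ⟨he, hmem⟩, rfl⟩
          exact ⟨hmem, ⟨e, he, rfl⟩⟩
        · rintro ⟨ha, hb⟩
          obtain ⟨e, he, rfl⟩ := hb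
          exact ⟨e, ⟨he, ha⟩, rfl⟩
      have hcardf : ((dsX r s).filter (fun e => g e ∈ (dsY r s).image g)).card = Iset.card := by
        rw [← himg]
        exact (Finset.card_image_of_injOn
          (hinjX.mono (by intro x hx; exact (Finset.mem_filter.1 hx).1))).symm
      rw [hcardf] at hsplit
      rw [← card_dsX r s, ← hsplit]
      ring
    -- the finset of uniquely colored edges
    set P : Sym2 W → Prop := fun e => ∀ e' ∈ dsY r s ∪ dsX r s, g e' = g e → e' = e with hP
    set Ufin : Finset (Sym2 W) := (dsY r s ∪ dsX r s).filter P with hU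
    have hsubU : {e | e ∈ (doubleStar r s).edgeSet ∧
        ∀ e' ∈ (doubleStar r s).edgeSet, c (e'.map f) = c (e.map f) → e' = e} ⊆ ↑Ufin := by
      intro e ⟨he, hu⟩
      have he' : e ∈ dsY r s ∪ dsX r s := by rw [hES] at he; exact_mod_cast he
      refine Finset.mem_coe.2 (Finset.mem_filter.2 ⟨he', ?_⟩)
      intro e' he'' hge
      refine hu e' ?_ hge
      rw [hES]; exact_mod_cast he''
    have hcount : copyUniqueCount (doubleStar r s) c f ≤ Ufin.card := by
      have h := Set.ncard_le_ncard hsubU (Finset.finite_toSet _)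
      rw [Set.ncard_coe_finset] at h
      exact h
    -- Ufin ⊆ Fy ∪ Fx ∪ {e₀}
    have hUsub : Ufin ⊆ Fy ∪ Fx ∪ {e₀} := by
      intro e he
      obtain ⟨heE, hPe⟩ := Finset.mem_filter.1 he
      by_cases h0 : e = e₀
      · exact Finset.mem_union_right _ (Finset.mem_singleton.2 h0)
      refine Finset.mem_union_left _ ?_
      rcases Finset.mem_union.1 heE with hY | hX
      · refine Finset.mem_union_left _ (Finset.mem_filter.2 ⟨hY, ?_⟩)
        intro hmem
        obtain ⟨e', he', hge⟩ := Finset.mem_image.1 hmem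
        have := hPe e' (Finset.mem_union_right _ he') hge
        subst this
        exact h0 (dsY_inter_dsX r s hY he')
      · refine Finset.mem_union_right _ (Finset.mem_filter.2 ⟨hX, ?_⟩)
        intro hmem
        obtain ⟨e', he', hge⟩ := Finset.mem_image.1 hmem
        have := hPe e' (Finset.mem_union_left _ he') hge
        subst this
        exact h0 (dsY_inter_dsX r s he' hX)
    have hUcard : Ufin.card ≤ Fy.card + Fx.card + 1 := by
      calc Ufin.card ≤ (Fy ∪ Fx ∪ {e₀}).card := Finset.card_le_card hUsub
        _ ≤ (Fy ∪ Fx).card + ({e₀} : Finset (Sym2 W)).card := Finset.card_union_le _ _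
        _ ≤ Fy.card + Fx.card + 1 := by
            have := Finset.card_union_le Fy Fx
            simp only [Finset.card_singleton]
            omega
    omega
  refine ⟨main, ?_⟩
  rintro ⟨f, hcopy, hk⟩
  have := main f hcopy
  omega
end

section
/- Let r ≤ s and 0 ≤ l ≤ r be natural numbers and set j = s − r + 1. For every n ≥ s + l there exists a simple graph G on n vertices with at least ⌊(s+l−1)·n/2⌋ edges together with a proper edge coloring of G in which no copy of the double star DS_{r,s} has j + 2l or more uniquely colored edges. (In other words, ex_{j+2l}(n, DS_{r,s}) ≥ (s+l−1)n/2 + o(n).) -/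
open SimpleGraph

section CycConstruction

/-- The graph on `Fin n` where `a ~ b` iff `(a+b) % n < K`. -/
def cyc (n K : ℕ) : SimpleGraph (Fin n) where
  Adj a b := a ≠ b ∧ (a.val + b.val) % n < K
  symm := ⟨by
    rintro a b ⟨h1, h2⟩
    exact ⟨h1.symm, by rwa [Nat.add_comm]⟩⟩
  loopless := ⟨fun a h => h.1 rfl⟩

instance (n K : ℕ) : DecidableRel (cyc n K).Adj := fun _ _ => instDecidableAnd

/-- Coloring by `(a+b) % n`. -/
def col (n : ℕ) : Sym2 (Fin n) → ℕ :=
  Sym2.lift ⟨fun a b => (a.val + b.val) % n, fun a b => by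
    show (a.val + b.val) % n = (b.val + a.val) % n
    rw [Nat.add_comm]⟩

lemma col_mk (n : ℕ) (a b : Fin n) : col n s(a, b) = (a.val + b.val) % n := rfl

lemma col_lt {n K : ℕ} {e : Sym2 (Fin n)} (he : e ∈ (cyc n K).edgeSet) : col n e < K := by
  induction e using Sym2.ind with
  | _ a b =>
    rw [SimpleGraph.mem_edgeSet] at he
    have h : (a.val + b.val) % n < K := he.2
    rwa [col_mk]

lemma col_proper (n K : ℕ) : IsProperEdgeColoring (cyc n K) (col n) := by
  rintro e₁ - e₂ - hne ⟨v, hv1, hv2⟩ hc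
  obtain ⟨w₁, rfl⟩ := Sym2.mem_iff_exists.mp hv1
  obtain ⟨w₂, rfl⟩ := Sym2.mem_iff_exists.mp hv2
  apply hne
  rw [col_mk, col_mk] at hc
  have h2 : w₁.val % n = w₂.val % n := Nat.ModEq.add_left_cancel' v.val hc
  rw [Nat.mod_eq_of_lt w₁.isLt, Nat.mod_eq_of_lt w₂.isLt] at h2
  rw [show w₁ = w₂ from Fin.ext h2]

lemma cyc_edge_bound (n K : ℕ) (hK : K ≤ n) :
    (K - 1) * n ≤ 2 * (cyc n K).edgeFinset.card := by
  classical
  rw [← SimpleGraph.sum_degrees_eq_twice_card_edges]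
  have hdeg : ∀ v : Fin n, K - 1 ≤ (cyc n K).degree v := by
    intro v
    have hn0 : 0 < n := v.pos
    set g : ℕ → Fin n := fun t => ⟨(t + (n - v.val)) % n, Nat.mod_lt _ hn0⟩ with hg
    have key : ∀ t < n, (v.val + (g t).val) % n = t := by
      intro t ht
      have h1 : v.val + (t + (n - v.val)) = t + n := by omega
      show (v.val + (t + (n - v.val)) % n) % n = t
      rw [Nat.add_mod_mod, h1, Nat.add_mod_right, Nat.mod_eq_of_lt ht]
    have hsub : ∀ t ∈ (Finset.range K).erase ((v.val + v.val) % n),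
        g t ∈ (cyc n K).neighborFinset v := by
      intro t ht
      obtain ⟨htne, htK⟩ := Finset.mem_erase.mp ht
      have htK' : t < K := Finset.mem_range.mp htK
      have htn : t < n := lt_of_lt_of_le htK' hK
      rw [SimpleGraph.mem_neighborFinset]
      refine ⟨?_, by rw [key t htn]; exact htK'⟩
      intro h
      have h2 := key t htn
      rw [← h] at h2
      exact htne h2.symm
    have hinj : Set.InjOn g ((Finset.range K).erase ((v.val + v.val) % n)) := by
      intro t1 ht1 t2 ht2 h12
      have htn1 : t1 < n := lt_of_lt_of_le (Finset.mem_range.mp (Finset.mem_of_mem_erase ht1)) hK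
      have htn2 : t2 < n := lt_of_lt_of_le (Finset.mem_range.mp (Finset.mem_of_mem_erase ht2)) hK
      have h := key t1 htn1
      rw [h12, key t2 htn2] at h
      exact h.symm
    have hcard := Finset.card_le_card_of_injOn g hsub hinj
    have herase : K - 1 ≤ ((Finset.range K).erase ((v.val + v.val) % n)).card := by
      have h := Finset.pred_card_le_card_erase
        (s := Finset.range K) (a := (v.val + v.val) % n)
      rwa [Finset.card_range] at h
    exact le_trans herase hcard
  calc (K - 1) * n = ∑ _v : Fin n, (K - 1) := by
        rw [Finset.sum_const, Finset.card_univ, Fintype.card_fin, smul_eq_mul, Nat.mul_comm]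
    _ ≤ ∑ v, (cyc n K).degree v := Finset.sum_le_sum fun v _ => hdeg v

end CycConstruction

section NoCopy

/-- The canonical list of edges of the double star. -/
def dsEdge (r s : ℕ) : Unit ⊕ Fin r ⊕ Fin s → Sym2 (Fin 2 ⊕ Fin r ⊕ Fin s)
  | Sum.inl _ => s(Sum.inl 0, Sum.inl 1)
  | Sum.inr (Sum.inl i) => s(Sum.inl 0, Sum.inr (Sum.inl i))
  | Sum.inr (Sum.inr j) => s(Sum.inl 1, Sum.inr (Sum.inr j))

/-- The slot injection used for the counting argument. -/
noncomputable def Jmap (n r s : ℕ) (f : Fin 2 ⊕ Fin r ⊕ Fin s → Fin n) :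
    Sym2 (Fin 2 ⊕ Fin r ⊕ Fin s) ⊕ Sym2 (Fin 2 ⊕ Fin r ⊕ Fin s) → ℕ × ℕ
  | Sum.inl e => (col n (e.map f), if (Sum.inl 1 : Fin 2 ⊕ Fin r ⊕ Fin s) ∈ e then 0 else 1)
  | Sum.inr e => (col n (e.map f), if (Sum.inl 1 : Fin 2 ⊕ Fin r ⊕ Fin s) ∈ e then 1 else 0)


lemma dsEdge_inj (r s : ℕ) : Function.Injective (dsEdge r s) := by
  intro a b hab
  rcases a with ⟨⟩ | i | j
  · rcases b with ⟨⟩ | i' | j'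
    · rfl
    · simp only [dsEdge, Sym2.eq_iff] at hab
      rcases hab with ⟨-, h⟩ | ⟨h, -⟩ <;> exact absurd h (by simp)
    · simp only [dsEdge, Sym2.eq_iff] at hab
      rcases hab with ⟨-, h⟩ | ⟨h, -⟩ <;> exact absurd h (by simp)
  · rcases b with ⟨⟩ | i' | j'
    · simp only [dsEdge, Sym2.eq_iff] at hab
      rcases hab with ⟨-, h⟩ | ⟨-, h⟩ <;> exact absurd h (by simp)
    · simp only [dsEdge, Sym2.eq_iff] at hab
      rcases hab with ⟨-, h⟩ | ⟨h, -⟩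
      · simp only [Sum.inr.injEq, Sum.inl.injEq] at h
        rw [h]
      · exact absurd h (by simp)
    · simp only [dsEdge, Sym2.eq_iff] at hab
      rcases hab with ⟨h, -⟩ | ⟨h, -⟩
      · exact absurd (Sum.inl.inj h) (by decide)
      · exact absurd h (by simp)
  · rcases b with ⟨⟩ | i' | j'
    · simp only [dsEdge, Sym2.eq_iff] at hab
      rcases hab with ⟨-, h⟩ | ⟨-, h⟩ <;> exact absurd h (by simp)
    · simp only [dsEdge, Sym2.eq_iff] at hab
      rcases hab with ⟨h, -⟩ | ⟨h, -⟩
      · exact absurd (Sum.inl.inj h) (by decide)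
      · exact absurd h (by simp)
    · simp only [dsEdge, Sym2.eq_iff] at hab
      rcases hab with ⟨-, h⟩ | ⟨h, -⟩
      · simp only [Sum.inr.injEq, Sum.inr.injEq] at h
        rw [h]
      · exact absurd h (by simp)

lemma doubleStar_edgeSet (r s : ℕ) :
    (doubleStar r s).edgeSet =
      (({s(Sum.inl 0, Sum.inl 1)} ∪
       {e | ∃ i : Fin r, e = s(Sum.inl 0, Sum.inr (Sum.inl i))} ∪
       {e | ∃ j : Fin s, e = s(Sum.inl 1, Sum.inr (Sum.inr j))}) :
        Set (Sym2 (Fin 2 ⊕ Fin r ⊕ Fin s))) := by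
  rw [doubleStar, SimpleGraph.edgeSet_fromEdgeSet]
  refine Set.Subset.antisymm Set.diff_subset fun e he => ⟨he, ?_⟩
  intro hd
  rw [Sym2.mem_diagSet] at hd
  simp only [Set.mem_union, Set.mem_singleton_iff, Set.mem_setOf_eq] at he
  rcases he with (h | ⟨i, rfl⟩) | ⟨j, rfl⟩
  · subst h
    rw [Sym2.mk_isDiag_iff] at hd
    simp at hd
  · rw [Sym2.mk_isDiag_iff] at hd
    simp at hd
  · rw [Sym2.mk_isDiag_iff] at hd
    simp at hd

lemma no_kunique_copy (n r s l : ℕ) (hrs : r ≤ s) :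
    ¬ ContainsKUniqueCopy (doubleStar r s) (cyc n (s + l)) (col n) (s - r + 1 + 2 * l) := by
  classical
  rintro ⟨f, ⟨finj, fadj⟩, hcount⟩
  have hDS := doubleStar_edgeSet r s
  -- every edge of the double star contains one of the two centers
  have hmem : ∀ e ∈ (doubleStar r s).edgeSet,
      (Sum.inl 0 : Fin 2 ⊕ Fin r ⊕ Fin s) ∈ e ∨ (Sum.inl 1 : Fin 2 ⊕ Fin r ⊕ Fin s) ∈ e := by
    intro e he
    rw [hDS] at he
    simp only [Set.mem_union, Set.mem_singleton_iff, Set.mem_setOf_eq] at he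
    rcases he with (h | ⟨i, rfl⟩) | ⟨j, rfl⟩
    · subst h
      exact Or.inl (Sym2.mem_mk_left _ _)
    · exact Or.inl (Sym2.mem_mk_left _ _)
    · exact Or.inr (Sym2.mem_mk_left _ _)
  have himg : ∀ e ∈ (doubleStar r s).edgeSet, e.map f ∈ (cyc n (s + l)).edgeSet := by
    intro e he
    induction e using Sym2.ind with
    | _ a b =>
      rw [Sym2.map_pair_eq, SimpleGraph.mem_edgeSet]
      rw [SimpleGraph.mem_edgeSet] at he
      exact fadj a b he
  have hshared : ∀ w : Fin 2 ⊕ Fin r ⊕ Fin s, ∀ e₁ ∈ (doubleStar r s).edgeSet,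
      ∀ e₂ ∈ (doubleStar r s).edgeSet,
      w ∈ e₁ → w ∈ e₂ → col n (e₁.map f) = col n (e₂.map f) → e₁ = e₂ := by
    intro w e₁ h1 e₂ h2 hw1 hw2 hcol
    by_contra hne
    refine col_proper n (s + l) _ (himg _ h1) _ (himg _ h2) ?_ ?_ hcol
    · exact fun h => hne (Sym2.map.injective finj h)
    · exact ⟨f w, Sym2.mem_map.mpr ⟨w, hw1, rfl⟩, Sym2.mem_map.mpr ⟨w, hw2, rfl⟩⟩
  have hlt : ∀ e ∈ (doubleStar r s).edgeSet, col n (e.map f) < s + l :=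
    fun e he => col_lt (himg e he)
  -- Finsets
  have hEfin : (doubleStar r s).edgeSet.Finite := Set.toFinite _
  set EH := hEfin.toFinset with hEH
  set U : Set (Sym2 (Fin 2 ⊕ Fin r ⊕ Fin s)) := {e | e ∈ (doubleStar r s).edgeSet ∧
    ∀ e' ∈ (doubleStar r s).edgeSet,
      col n (e'.map f) = col n (e.map f) → e' = e} with hUdef
  have hUfin : U.Finite := Set.toFinite _
  set UF := hUfin.toFinset with hUF
  have hUcard : s - r + 1 + 2 * l ≤ UF.card := by
    have h1 : copyUniqueCount (doubleStar r s) (col n) f = UF.card := by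
      rw [copyUniqueCount, hUF]
      exact Set.ncard_eq_toFinset_card _ hUfin
    rw [h1] at hcount
    exact hcount
  -- the double star has at least r+s+1 edges
  have hEHcard : r + s + 1 ≤ EH.card := by
    have hmaps : ∀ a ∈ (Finset.univ : Finset (Unit ⊕ Fin r ⊕ Fin s)), dsEdge r s a ∈ EH := by
      intro a _
      rw [hEH, Set.Finite.mem_toFinset, hDS]
      rcases a with ⟨⟩ | i | j
      · exact Set.mem_union_left _ (Set.mem_union_left _ rfl)
      · exact Set.mem_union_left _ (Set.mem_union_right _ ⟨i, rfl⟩)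
      · exact Set.mem_union_right _ ⟨j, rfl⟩
    have hinj : Set.InjOn (dsEdge r s) (Finset.univ : Finset (Unit ⊕ Fin r ⊕ Fin s)) :=
      (dsEdge_inj r s).injOn
    have h := Finset.card_le_card_of_injOn (dsEdge r s) hmaps hinj
    rwa [Finset.card_univ, Fintype.card_sum, Fintype.card_sum, Fintype.card_unit,
      Fintype.card_fin, Fintype.card_fin, Nat.add_comm 1 (r + s)] at h
  -- the injection
  have hJmaps : ∀ a ∈ EH.disjSum UF,
      Jmap n r s f a ∈ (Finset.range (s + l)) ×ˢ ({0, 1} : Finset ℕ) := by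
    intro a ha
    rcases a with e | e
    · rw [Finset.inl_mem_disjSum, hEH, Set.Finite.mem_toFinset] at ha
      refine Finset.mem_product.mpr ⟨Finset.mem_range.mpr (hlt e ha), ?_⟩
      by_cases hx : (Sum.inl 1 : Fin 2 ⊕ Fin r ⊕ Fin s) ∈ e <;> simp [Jmap, hx]
    · rw [Finset.inr_mem_disjSum, hUF, Set.Finite.mem_toFinset] at ha
      refine Finset.mem_product.mpr ⟨Finset.mem_range.mpr (hlt e ha.1), ?_⟩
      by_cases hx : (Sum.inl 1 : Fin 2 ⊕ Fin r ⊕ Fin s) ∈ e <;> simp [Jmap, hx]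
  have hJinj : Set.InjOn (Jmap n r s f) (EH.disjSum UF) := by
    intro a ha b hb hab
    rw [Finset.mem_coe] at ha hb
    rcases a with e₁ | e₁ <;> rcases b with e₂ | e₂
    · rw [Finset.inl_mem_disjSum, hEH, Set.Finite.mem_toFinset] at ha hb
      simp only [Jmap, Prod.mk.injEq] at hab
      obtain ⟨hc, hs⟩ := hab
      congr 1
      by_cases hx : (Sum.inl 1 : Fin 2 ⊕ Fin r ⊕ Fin s) ∈ e₁
      · have hx2 : (Sum.inl 1 : Fin 2 ⊕ Fin r ⊕ Fin s) ∈ e₂ := by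
          by_contra h
          rw [if_pos hx, if_neg h] at hs
          exact absurd hs (by norm_num)
        exact hshared _ e₁ ha e₂ hb hx hx2 hc
      · have hx2 : ¬ (Sum.inl 1 : Fin 2 ⊕ Fin r ⊕ Fin s) ∈ e₂ := by
          intro h
          rw [if_neg hx, if_pos h] at hs
          exact absurd hs (by norm_num)
        have hy1 := (hmem e₁ ha).resolve_right hx
        have hy2 := (hmem e₂ hb).resolve_right hx2
        exact hshared _ e₁ ha e₂ hb hy1 hy2 hc
    · rw [Finset.inl_mem_disjSum, hEH, Set.Finite.mem_toFinset] at ha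
      rw [Finset.inr_mem_disjSum, hUF, Set.Finite.mem_toFinset] at hb
      simp only [Jmap, Prod.mk.injEq] at hab
      obtain ⟨hc, hs⟩ := hab
      have heq : e₁ = e₂ := hb.2 e₁ ha hc
      subst heq
      by_cases hx : (Sum.inl 1 : Fin 2 ⊕ Fin r ⊕ Fin s) ∈ e₁ <;>
        simp [hx] at hs
    · rw [Finset.inr_mem_disjSum, hUF, Set.Finite.mem_toFinset] at ha
      rw [Finset.inl_mem_disjSum, hEH, Set.Finite.mem_toFinset] at hb
      simp only [Jmap, Prod.mk.injEq] at hab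
      obtain ⟨hc, hs⟩ := hab
      have heq : e₂ = e₁ := ha.2 e₂ hb hc.symm
      subst heq
      by_cases hx : (Sum.inl 1 : Fin 2 ⊕ Fin r ⊕ Fin s) ∈ e₂ <;>
        simp [hx] at hs
    · rw [Finset.inr_mem_disjSum, hUF, Set.Finite.mem_toFinset] at ha hb
      simp only [Jmap, Prod.mk.injEq] at hab
      obtain ⟨hc, -⟩ := hab
      congr 1
      exact hb.2 e₁ ha.1 hc
  have hcards := Finset.card_le_card_of_injOn (Jmap n r s f) hJmaps hJinj
  rw [Finset.card_disjSum, Finset.card_product, Finset.card_range] at hcards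
  have h01 : ({0, 1} : Finset ℕ).card = 2 := by decide
  rw [h01] at hcards
  omega

end NoCopy

/-- For `r ≤ s`, `l ≤ r` and `n ≥ s + l`, there is an `n`-vertex graph
with at least `⌊(s+l−1)·n/2⌋` edges and a proper edge coloring containing no copy of
`DS_{r,s}` with `(s − r + 1) + 2l` or more uniquely colored edges; i.e.
`ex_{j+2l}(n, DS_{r,s}) ≥ (s+l−1)n/2 + o(n)`. -/
theorem doubleStar_kUnique_turan_lower (r s l : ℕ) (hrs : r ≤ s) (hl : l ≤ r)
    (n : ℕ) (hn : s + l ≤ n) :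
    ∃ (G : SimpleGraph (Fin n)) (c : Sym2 (Fin n) → ℕ),
      (s + l - 1) * n / 2 ≤ G.edgeSet.ncard ∧ IsProperEdgeColoring G c ∧
      ¬ ContainsKUniqueCopy (doubleStar r s) G c (s - r + 1 + 2 * l) := by
  refine ⟨cyc n (s + l), col n, ?_, col_proper n (s + l), no_kunique_copy n r s l hrs⟩
  have h2 := cyc_edge_bound n (s + l) hn
  have h3 : (s + l - 1) * n / 2 ≤ 2 * (cyc n (s + l)).edgeFinset.card / 2 :=
    Nat.div_le_div_right h2
  have h4 : 2 * (cyc n (s + l)).edgeFinset.card / 2 = (cyc n (s + l)).edgeFinset.card := by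
    omega
  rw [h4] at h3
  rwa [← SimpleGraph.coe_edgeFinset, Set.ncard_coe_finset]
end

section
/- Let r ≤ s be natural numbers. For every n, every simple graph G on n vertices with more than (s+2r)·n/2 edges has the property that every proper edge coloring of G contains a rainbow copy of the double star DS_{r,s}. (In other words, ex⋆(n, DS_{r,s}) ≤ (s+2r)n/2.) -/
open SimpleGraph

open Finset

lemma exists_good_edge {n : ℕ} (G : SimpleGraph (Fin n)) [DecidableRel G.Adj] (k r : ℕ) (h2r : 2 * r ≤ k)
    (hG : k * n < ∑ v : Fin n, G.degree v) :
    ∃ x y, G.Adj x y ∧ k + 1 ≤ G.degree x ∧ r + 1 ≤ G.degree y := by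
  classical
  by_contra h
  push_neg at h
  -- h : ∀ x y, G.Adj x y → k + 1 ≤ G.degree x → G.degree y < r + 1
  set A : Finset (Fin n) := univ.filter (fun v => k < G.degree v) with hA
  set B : Finset (Fin n) := univ.filter (fun v => G.degree v ≤ r) with hB
  set M : Finset (Fin n) := univ.filter (fun v => ¬ k < G.degree v ∧ ¬ G.degree v ≤ r) with hM
  have hBr : ∀ v ∈ B, G.degree v ≤ r := fun v hv => (mem_filter.mp hv).2
  have key : ∑ v ∈ A, G.degree v ≤ r * B.card := by
    have hnb : ∀ v ∈ A, G.neighborFinset v = B.filter (fun u => G.Adj v u) := by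
      intro v hv
      ext u
      simp only [mem_filter, mem_neighborFinset]
      constructor
      · intro hadj
        refine ⟨mem_filter.mpr ⟨mem_univ u, ?_⟩, hadj⟩
        have := h v u hadj (mem_filter.mp hv).2
        omega
      · exact fun h => h.2
    calc ∑ v ∈ A, G.degree v = ∑ v ∈ A, (B.filter (fun u => G.Adj v u)).card := by
          refine Finset.sum_congr rfl fun v hv => ?_
          rw [SimpleGraph.degree, hnb v hv]
      _ = ∑ v ∈ A, ∑ u ∈ B, (if G.Adj v u then 1 else 0) := by
          refine Finset.sum_congr rfl fun v _ => ?_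
          rw [Finset.card_filter]
      _ = ∑ u ∈ B, ∑ v ∈ A, (if G.Adj v u then 1 else 0) := Finset.sum_comm
      _ ≤ ∑ u ∈ B, G.degree u := by
          refine Finset.sum_le_sum fun u hu => ?_
          rw [← Finset.card_filter]
          rw [SimpleGraph.degree, neighborFinset_eq_filter]
          refine Finset.card_le_card ?_
          intro v hv
          simp only [mem_filter] at hv ⊢
          exact ⟨mem_univ v, hv.2.symm⟩
      _ ≤ ∑ u ∈ B, r := Finset.sum_le_sum hBr
      _ = r * B.card := by rw [Finset.sum_const, smul_eq_mul, mul_comm]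
  have hsplit : ∑ v ∈ univ.filter (fun v => ¬ k < G.degree v), G.degree v
      ≤ r * B.card + k * M.card := by
    have : univ.filter (fun v => ¬ k < G.degree v)
        = B ∪ M := by
      ext v
      simp only [hB, hM, mem_filter, mem_union, mem_univ, true_and]
      omega
    rw [this, Finset.sum_union]
    · gcongr
      · calc ∑ v ∈ B, G.degree v ≤ ∑ v ∈ B, r := Finset.sum_le_sum hBr
          _ = r * B.card := by rw [Finset.sum_const, smul_eq_mul, mul_comm]
      · calc ∑ v ∈ M, G.degree v ≤ ∑ v ∈ M, k := by
              refine Finset.sum_le_sum fun v hv => ?_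
              have := (mem_filter.mp hv).2.1; omega
          _ = k * M.card := by rw [Finset.sum_const, smul_eq_mul, mul_comm]
    · rw [Finset.disjoint_left]
      intro v hv hv'
      have := (mem_filter.mp hv).2
      have := (mem_filter.mp hv').2.2
      omega
  have hcard : B.card + M.card ≤ n := by
    have : B ∪ M ⊆ univ := subset_univ _
    have hd : Disjoint B M := by
      rw [Finset.disjoint_left]
      intro v hv hv'
      have := (mem_filter.mp hv).2
      have := (mem_filter.mp hv').2.2
      omega
    calc B.card + M.card = (B ∪ M).card := (Finset.card_union_of_disjoint hd).symm
      _ ≤ (univ : Finset (Fin n)).card := Finset.card_le_card this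
      _ = n := by simp
  have htot : ∑ v : Fin n, G.degree v ≤ k * n := by
    rw [← Finset.sum_filter_add_sum_filter_not univ (fun v => k < G.degree v)]
    calc ∑ v ∈ A, G.degree v + ∑ v ∈ univ.filter (fun v => ¬ k < G.degree v), G.degree v
        ≤ r * B.card + (r * B.card + k * M.card) := by gcongr
      _ = 2 * r * B.card + k * M.card := by ring
      _ ≤ k * B.card + k * M.card := by gcongr
      _ = k * (B.card + M.card) := by ring
      _ ≤ k * n := by gcongr
  omega

lemma doubleStar_mem_edgeSet {a b : ℕ} {e : Sym2 (Fin 2 ⊕ Fin a ⊕ Fin b)} :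
    e ∈ (doubleStar a b).edgeSet ↔
      e = s(Sum.inl 0, Sum.inl 1) ∨
      (∃ i : Fin a, e = s(Sum.inl 0, Sum.inr (Sum.inl i))) ∨
      (∃ j : Fin b, e = s(Sum.inl 1, Sum.inr (Sum.inr j))) := by
  rw [doubleStar, edgeSet_fromEdgeSet]
  constructor
  · rintro ⟨h, -⟩
    simpa [Set.mem_union, or_assoc] using h
  · intro h
    constructor
    · simpa [Set.mem_union, or_assoc] using h
    · rcases h with h | ⟨i, h⟩ | ⟨j, h⟩ <;> subst h <;> simp [Sym2.isDiag_iff_proj_eq]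

lemma rainbow_of_good_edge {n r s : ℕ} (G : SimpleGraph (Fin n)) [DecidableRel G.Adj]
    (c : Sym2 (Fin n) → ℕ) (hc : IsProperEdgeColoring G c)
    {x y : Fin n} (hxy : G.Adj x y) (hdx : s + 2 * r + 1 ≤ G.degree x)
    (hdy : r + 1 ≤ G.degree y) :
    ContainsRainbowCopy (doubleStar r s) G c := by
  classical
  have hcne : ∀ {a b a' : Fin n}, G.Adj a b → G.Adj a a' → b ≠ a' → c s(a, b) ≠ c s(a, a') := by
    intro a b a' h1 h2 hb
    apply hc _ ((G.mem_edgeSet).2 h1) _ ((G.mem_edgeSet).2 h2)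
    · intro heq
      rw [Sym2.eq_iff] at heq
      rcases heq with ⟨-, h⟩ | ⟨h, -⟩
      · exact hb h
      · exact (G.ne_of_adj h2).symm h.symm
    · exact ⟨a, by simp, by simp⟩
  -- choose Y
  have hYcard : r ≤ (G.neighborFinset y \ {x}).card := by
    have h1 := Finset.le_card_sdiff ({x} : Finset (Fin n)) (G.neighborFinset y)
    have h2 : (G.neighborFinset y).card = G.degree y := rfl
    simp only [Finset.card_singleton] at h1
    omega
  obtain ⟨Y, hYsub, hYcard⟩ := Finset.exists_subset_card_eq hYcard
  set Yf : Fin r → Fin n := fun i => (Y.orderIsoOfFin hYcard i : Fin n) with hYfdef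
  have hYmem : ∀ i, Yf i ∈ Y := fun i => (Y.orderIsoOfFin hYcard i).2
  have hYadj : ∀ i, G.Adj y (Yf i) := fun i => by
    have := hYsub (hYmem i); rw [Finset.mem_sdiff, mem_neighborFinset] at this; exact this.1
  have hYnx : ∀ i, Yf i ≠ x := fun i => by
    have := hYsub (hYmem i); rw [Finset.mem_sdiff, Finset.mem_singleton] at this; exact this.2
  have hYny : ∀ i, Yf i ≠ y := fun i => (G.ne_of_adj (hYadj i)).symm
  have hYinj : Function.Injective Yf := fun i j hij =>
    (Y.orderIsoOfFin hYcard).injective (Subtype.ext hij)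
  -- bad set
  set Bad : Finset (Fin n) := (G.neighborFinset x).filter
      (fun z => ∃ i : Fin r, c s(x, z) = c s(y, Yf i)) with hBaddef
  have hBadCard : Bad.card ≤ r := by
    have h1 : Bad.card ≤ (Finset.univ.image (fun i : Fin r => c s(y, Yf i))).card := by
      apply Finset.card_le_card_of_injOn (fun z => c s(x, z))
      · intro z hz
        rw [Finset.mem_coe, hBaddef, Finset.mem_filter] at hz
        obtain ⟨i, hi⟩ := hz.2
        beta_reduce; rw [hi]; exact Finset.mem_image_of_mem _ (Finset.mem_univ i)
      · intro z₁ hz₁ z₂ hz₂ hcz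
        by_contra hne'
        have h₁ : G.Adj x z₁ := by
          have := Finset.mem_coe.mp hz₁; rw [hBaddef, Finset.mem_filter, mem_neighborFinset] at this
          exact this.1
        have h₂ : G.Adj x z₂ := by
          have := Finset.mem_coe.mp hz₂; rw [hBaddef, Finset.mem_filter, mem_neighborFinset] at this
          exact this.1
        exact hcne h₁ h₂ hne' hcz
    calc Bad.card ≤ _ := h1
      _ ≤ (Finset.univ : Finset (Fin r)).card := Finset.card_image_le
      _ = r := by simp
  -- choose X
  set T : Finset (Fin n) := G.neighborFinset x \ (insert y (Y ∪ Bad)) with hTdef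
  have hTcard : s ≤ T.card := by
    have h1 : (insert y (Y ∪ Bad)).card ≤ 1 + (r + r) := by
      calc (insert y (Y ∪ Bad)).card ≤ (Y ∪ Bad).card + 1 := Finset.card_insert_le _ _
        _ ≤ (Y.card + Bad.card) + 1 := by
            have := Finset.card_union_le Y Bad; omega
        _ ≤ 1 + (r + r) := by omega
    have h2 := Finset.le_card_sdiff (insert y (Y ∪ Bad)) (G.neighborFinset x)
    rw [← hTdef] at h2
    have h3 : (G.neighborFinset x).card = G.degree x := rfl
    omega
  obtain ⟨X, hXsub, hXcard⟩ := Finset.exists_subset_card_eq hTcard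
  set Xf : Fin s → Fin n := fun j => (X.orderIsoOfFin hXcard j : Fin n) with hXfdef
  have hXmem : ∀ j, Xf j ∈ T := fun j => hXsub (X.orderIsoOfFin hXcard j).2
  have hXadj : ∀ j, G.Adj x (Xf j) := fun j => by
    have := hXmem j; rw [hTdef, Finset.mem_sdiff, mem_neighborFinset] at this; exact this.1
  have hXnx : ∀ j, Xf j ≠ x := fun j => (G.ne_of_adj (hXadj j)).symm
  have hXexc : ∀ j, Xf j ∉ insert y (Y ∪ Bad) := fun j => by
    have := hXmem j; rw [hTdef, Finset.mem_sdiff] at this; exact this.2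
  have hXny : ∀ j, Xf j ≠ y := fun j hj => hXexc j (by rw [hj]; exact Finset.mem_insert_self _ _)
  have hXnY : ∀ j, Xf j ∉ Y := fun j hj =>
    hXexc j (Finset.mem_insert_of_mem (Finset.mem_union_left _ hj))
  have hXcol : ∀ j i, c s(x, Xf j) ≠ c s(y, Yf i) := by
    intro j i hcol
    apply hXexc j
    apply Finset.mem_insert_of_mem
    apply Finset.mem_union_right
    rw [hBaddef, Finset.mem_filter, mem_neighborFinset]
    exact ⟨hXadj j, i, hcol⟩
  have hXinj : Function.Injective Xf := fun i j hij =>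
    (X.orderIsoOfFin hXcard).injective (Subtype.ext hij)
  -- the map
  set f : Fin 2 ⊕ Fin r ⊕ Fin s → Fin n :=
    Sum.elim (fun i => if i = 0 then y else x) (Sum.elim Yf Xf) with hfdef
  have hf0 : f (Sum.inl 0) = y := by simp [hfdef]
  have hf1 : f (Sum.inl 1) = x := by
    simp only [hfdef, Sum.elim_inl]
    rw [if_neg (by decide)]
  have hfY : ∀ i, f (Sum.inr (Sum.inl i)) = Yf i := fun i => rfl
  have hfX : ∀ j, f (Sum.inr (Sum.inr j)) = Xf j := fun j => rfl
  have hxny : x ≠ y := G.ne_of_adj hxy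
  refine ⟨f, ⟨?_, ?_⟩, ?_⟩
  · -- injective
    rintro (i | i | i) (j | j | j) hij
    · -- inl inl
      fin_cases i <;> fin_cases j <;> simp_all
    · exfalso
      rw [hfY] at hij
      simp only [hfdef, Sum.elim_inl] at hij
      split_ifs at hij
      · exact hYny j hij.symm
      · exact hYnx j hij.symm
    · exfalso
      rw [hfX] at hij
      simp only [hfdef, Sum.elim_inl] at hij
      split_ifs at hij
      · exact hXny j hij.symm
      · exact hXnx j hij.symm
    · exfalso
      rw [hfY] at hij
      simp only [hfdef, Sum.elim_inl] at hij
      split_ifs at hij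
      · exact hYny i hij
      · exact hYnx i hij
    · rw [hfY, hfY] at hij
      rw [hYinj hij]
    · exfalso
      rw [hfY, hfX] at hij
      exact hXnY j (hij ▸ hYmem i)
    · exfalso
      rw [hfX] at hij
      simp only [hfdef, Sum.elim_inl] at hij
      split_ifs at hij
      · exact hXny i hij
      · exact hXnx i hij
    · exfalso
      rw [hfX, hfY] at hij
      exact hXnY i (hij ▸ hYmem j)
    · rw [hfX, hfX] at hij
      rw [hXinj hij]
  · -- adjacency
    intro a b hab
    have hmem : s(a, b) ∈ (doubleStar r s).edgeSet := hab
    rw [doubleStar_mem_edgeSet] at hmem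
    rcases hmem with h | ⟨i, h⟩ | ⟨j, h⟩ <;> rw [Sym2.eq_iff] at h
    · rcases h with ⟨rfl, rfl⟩ | ⟨rfl, rfl⟩
      · rw [hf0, hf1]; exact hxy.symm
      · rw [hf0, hf1]; exact hxy
    · rcases h with ⟨rfl, rfl⟩ | ⟨rfl, rfl⟩
      · rw [hf0, hfY]; exact hYadj i
      · rw [hf0, hfY]; exact (hYadj i).symm
    · rcases h with ⟨rfl, rfl⟩ | ⟨rfl, rfl⟩
      · rw [hf1, hfX]; exact hXadj j
      · rw [hf1, hfX]; exact (hXadj j).symm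
  · -- rainbow
    intro e₁ he₁ e₂ he₂ hne12
    rw [doubleStar_mem_edgeSet] at he₁ he₂
    rcases he₁ with rfl | ⟨i, rfl⟩ | ⟨j, rfl⟩ <;>
      rcases he₂ with rfl | ⟨i', rfl⟩ | ⟨j', rfl⟩ <;>
      simp only [Sym2.map_pair_eq, hf0, hf1, hfY, hfX]
    · exact absurd rfl hne12
    · exact hcne hxy.symm (hYadj i') ((hYnx i').symm)
    · rw [Sym2.eq_swap (a := y) (b := x)]
      exact hcne hxy (hXadj j') ((hXny j').symm)
    · exact (hcne hxy.symm (hYadj i) ((hYnx i).symm)).symm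
    · refine hcne (hYadj i) (hYadj i') fun h => ?_
      exact hne12 (by rw [hYinj h])
    · exact fun h => hXcol j' i h.symm
    · refine fun h => ?_
      rw [Sym2.eq_swap (a := y) (b := x)] at h
      exact hcne hxy (hXadj j) ((hXny j).symm) h.symm
    · exact hXcol j i'
    · refine hcne (hXadj j) (hXadj j') fun h => ?_
      exact hne12 (by rw [hXinj h])

/-- For `r ≤ s`, every `n`-vertex graph with more than `(s+2r)·n/2`
edges is such that every proper edge coloring contains a rainbow copy of
`DS_{r,s}`; i.e. `ex⋆(n, DS_{r,s}) ≤ (s+2r)n/2`. -/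
theorem doubleStar_rainbow_turan_upper (r s : ℕ) (hrs : r ≤ s)
    (n : ℕ) (G : SimpleGraph (Fin n)) (hG : (s + 2 * r) * n < 2 * G.edgeSet.ncard)
    (c : Sym2 (Fin n) → ℕ) (hc : IsProperEdgeColoring G c) :
    ContainsRainbowCopy (doubleStar r s) G c := by
  classical
  have hdeg : (s + 2 * r) * n < ∑ v : Fin n, G.degree v := by
    rw [SimpleGraph.sum_degrees_eq_twice_card_edges]
    rwa [← SimpleGraph.coe_edgeFinset, Set.ncard_coe_finset] at hG
  obtain ⟨x, y, hxy, hdx, hdy⟩ := exists_good_edge G (s + 2 * r) r (by omega) hdeg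
  exact rainbow_of_good_edge G c hc hxy (by omega) hdy
end

section
/- Let r ≤ s be natural numbers. For every n ≥ s + r there exists a simple graph G on n vertices with at least ⌊(s+r−1)·n/2⌋ edges together with a proper edge coloring of G containing no rainbow copy of the double star DS_{r,s}. (In other words, ex⋆(n, DS_{r,s}) ≥ (s+r−1)n/2 + o(1).) -/
open SimpleGraph

/-- For `r ≤ s` and `n ≥ s + r`, there is an `n`-vertex graph with at
least `⌊(s+r−1)·n/2⌋` edges and a proper edge coloring containing no rainbow copy of
`DS_{r,s}`; i.e. `ex⋆(n, DS_{r,s}) ≥ (s+r−1)n/2 + o(1)`. -/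
theorem doubleStar_rainbow_turan_lower (r s : ℕ) (hrs : r ≤ s)
    (n : ℕ) (hn : s + r ≤ n) :
    ∃ (G : SimpleGraph (Fin n)) (c : Sym2 (Fin n) → ℕ),
      (s + r - 1) * n / 2 ≤ G.edgeSet.ncard ∧ IsProperEdgeColoring G c ∧
      ¬ ContainsRainbowCopy (doubleStar r s) G c := by
  classical
  by_cases hk1 : s + r ≤ 1
  · refine ⟨⊥, fun _ => 0, ?_, ?_, ?_⟩
    · have h0 : s + r - 1 = 0 := by omega
      simp [h0]
    · intro e₁ he₁
      simp at he₁
    · rintro ⟨f, ⟨hinj, hadj⟩, -⟩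
      have hds : (doubleStar r s).Adj (Sum.inl 0) (Sum.inl 1) := by
        rw [doubleStar, SimpleGraph.fromEdgeSet_adj]
        exact ⟨Or.inl (Or.inl rfl), by simp⟩
      exact (hadj _ _ hds)
  -- main case
  push_neg at hk1
  set k := s + r with hkdef
  have hk2 : 2 ≤ k := hk1
  have hkn : k ≤ n := hn
  have hn2 : 2 ≤ n := le_trans hk2 hkn
  haveI : NeZero n := ⟨by omega⟩
  let G : SimpleGraph (Fin n) :=
    { Adj := fun i j => i ≠ j ∧ ((i + j : Fin n) : ℕ) < k
      symm := by
        constructor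
        intro i j ⟨h1, h2⟩
        exact ⟨h1.symm, by rwa [add_comm]⟩
      loopless := ⟨fun i h => h.1 rfl⟩ }
  have hGadj : ∀ i j : Fin n, G.Adj i j ↔ i ≠ j ∧ ((i + j : Fin n) : ℕ) < k :=
    fun i j => Iff.rfl
  let c : Sym2 (Fin n) → ℕ :=
    Sym2.lift ⟨fun i j => ((i + j : Fin n) : ℕ), fun i j => congrArg Fin.val (add_comm i j)⟩
  have hc : ∀ i j : Fin n, c s(i, j) = ((i + j : Fin n) : ℕ) := fun i j => rfl
  refine ⟨G, c, ?_, ?_, ?_⟩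
  · -- edge count
    haveI : DecidableRel G.Adj := fun i j => instDecidableAnd
    -- degree bound
    have hdeg : ∀ i : Fin n, k - 1 ≤ G.degree i := by
      intro i
      have hfil : (Finset.univ.filter (fun v : Fin n => (v : ℕ) < k)).card = k := by
        have himg : Finset.univ.filter (fun v : Fin n => (v : ℕ) < k)
            = Finset.image (Fin.castLE hkn) Finset.univ := by
          ext v
          simp only [Finset.mem_filter, Finset.mem_univ, true_and, Finset.mem_image]
          constructor
          · intro hv
            exact ⟨⟨(v : ℕ), hv⟩, rfl⟩
          · rintro ⟨w, rfl⟩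
            exact w.2
        rw [himg, Finset.card_image_of_injective _ (Fin.castLE_injective hkn)]
        simp
      set T := (Finset.univ.filter (fun v : Fin n => (v : ℕ) < k)).erase (i + i) with hT
      have hTcard : k - 1 ≤ T.card := by
        have := Finset.pred_card_le_card_erase
          (s := Finset.univ.filter (fun v : Fin n => (v : ℕ) < k)) (a := i + i)
        rw [hT]
        omega
      have hsub : T.image (fun v => v - i) ⊆ G.neighborFinset i := by
        intro j hj
        simp only [Finset.mem_image] at hj
        obtain ⟨v, hv, rfl⟩ := hj
        rw [hT, Finset.mem_erase, Finset.mem_filter] at hv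
        rw [SimpleGraph.mem_neighborFinset, hGadj]
        constructor
        · intro h
          apply hv.1
          have h' : v - i = i := h.symm
          calc v = i + (v - i) := by abel
            _ = i + i := by rw [h']
        · have : i + (v - i) = v := by abel
          rw [this]
          exact hv.2.2
      have hinj2 : Function.Injective (fun v : Fin n => v - i) := fun a b h => by
        simpa using congrArg (· + i) h
      calc k - 1 ≤ T.card := hTcard
        _ = (T.image (fun v => v - i)).card :=
            (Finset.card_image_of_injective _ hinj2).symm
        _ ≤ (G.neighborFinset i).card := Finset.card_le_card hsub
        _ = G.degree i := rfl
    have hsum : n * (k - 1) ≤ ∑ v : Fin n, G.degree v := by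
      calc n * (k - 1) = ∑ _v : Fin n, (k - 1) := by
            simp [Finset.sum_const, mul_comm]
        _ ≤ ∑ v : Fin n, G.degree v := Finset.sum_le_sum fun v _ => hdeg v
    rw [SimpleGraph.sum_degrees_eq_twice_card_edges] at hsum
    have hE : G.edgeSet.ncard = G.edgeFinset.card := by
      rw [SimpleGraph.edgeFinset, Set.ncard_eq_toFinset_card']
    have hsum' : (k - 1) * n ≤ 2 * G.edgeFinset.card := by
      rw [mul_comm]; exact hsum
    rw [hE]
    omega
  · -- proper coloring
    intro e₁ he₁ e₂ he₂ hne hshare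
    induction e₁ using Sym2.ind with
    | _ a b =>
    induction e₂ using Sym2.ind with
    | _ a' b' =>
    obtain ⟨v, hv1, hv2⟩ := hshare
    rw [Sym2.mem_iff] at hv1 hv2
    rw [hc, hc]
    intro hcol
    apply hne
    have hsum : a + b = a' + b' := Fin.ext hcol
    rcases hv1 with rfl | rfl <;> rcases hv2 with h | h
    · rw [← h] at hsum ⊢
      have : b = b' := by
        have := add_left_cancel hsum
        exact this
      rw [this]
    · rw [← h] at hsum ⊢
      have hba' : b = a' := by
        have : v + b = a' + v := by rw [hsum]
        have : b = a' := by
          have h2 : v + b = v + a' := by rw [this, add_comm]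
          exact add_left_cancel h2
        exact this
      rw [hba', Sym2.eq_swap]
    · rw [← h] at hsum ⊢
      have hab' : a = b' := by
        have h2 : a + v = v + b' := hsum
        have h3 : v + a = v + b' := by rw [← h2, add_comm]
        exact add_left_cancel h3
      rw [hab', Sym2.eq_swap]
    · rw [← h] at hsum ⊢
      have : a = a' := by
        have h2 : a + v = a' + v := hsum
        exact add_right_cancel h2
      rw [this]
  · -- no rainbow copy
    rintro ⟨f, ⟨hinj, hadj⟩, hrb⟩
    let φ : Unit ⊕ Fin r ⊕ Fin s → Sym2 (Fin 2 ⊕ Fin r ⊕ Fin s) := fun x =>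
      match x with
      | Sum.inl _ => s(Sum.inl 0, Sum.inl 1)
      | Sum.inr (Sum.inl i) => s(Sum.inl 0, Sum.inr (Sum.inl i))
      | Sum.inr (Sum.inr j) => s(Sum.inl 1, Sum.inr (Sum.inr j))
    have hφ_mem : ∀ x, φ x ∈ (doubleStar r s).edgeSet := by
      rintro (⟨⟩ | i | j) <;>
        · rw [SimpleGraph.mem_edgeSet, doubleStar, SimpleGraph.fromEdgeSet_adj]
          refine ⟨?_, by simp⟩
          first
          | exact Or.inl (Or.inl rfl)
          | exact Or.inl (Or.inr ⟨_, rfl⟩)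
          | exact Or.inr ⟨_, rfl⟩
    have hφ_inj : Function.Injective φ := by
      rintro (⟨⟩ | i | j) (⟨⟩ | i' | j') h <;>
        simp_all [φ, Sym2.eq_iff]
    have hcol : ∀ x, c ((φ x).map f) < k := by
      intro x
      have hmem := hφ_mem x
      rcases x with ⟨⟩ | i | j <;>
        · simp only [φ, Sym2.map_pair_eq]
          rw [hc]
          exact (hadj _ _ ((SimpleGraph.mem_edgeSet _).1 hmem)).2
    let ψ : Unit ⊕ Fin r ⊕ Fin s → Fin k := fun x => ⟨c ((φ x).map f), hcol x⟩
    have hψ_inj : Function.Injective ψ := by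
      intro x y h
      by_contra hxy
      exact hrb (φ x) (hφ_mem x) (φ y) (hφ_mem y)
        (fun h' => hxy (hφ_inj h')) (congrArg Fin.val h)
    have := Fintype.card_le_of_injective ψ hψ_inj
    simp only [Fintype.card_sum, Fintype.card_unit, Fintype.card_fin] at this
    omega
end

section
/- The complete graph K_6 admits a proper edge coloring using only 5 colors, and every proper edge coloring of K_6 that uses at most 5 colors (equivalently, a coloring in which every vertex is incident to exactly one edge of each color) contains no rainbow copy of the double star DS_{2,2}. -/
open SimpleGraph

def g6 : Fin 6 → Fin 6 → ℕ := fun i j =>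
  if i = 5 then j.val else if j = 5 then i.val else (3*(i.val+j.val)) % 5

lemma g6_comm : ∀ i j, g6 i j = g6 j i := by decide

def c6 : Sym2 (Fin 6) → ℕ := Sym2.lift ⟨g6, g6_comm⟩

lemma g6_proper : ∀ v a b : Fin 6, v ≠ a → v ≠ b → a ≠ b → g6 v a ≠ g6 v b := by decide
lemma g6_mem : ∀ a b : Fin 6, a ≠ b → g6 a b ∈ ({0,1,2,3,4} : Finset ℕ) := by decide

lemma c6_pair (a b : Fin 6) : c6 s(a,b) = g6 a b := rfl

lemma part1 : IsProperEdgeColoring (⊤ : SimpleGraph (Fin 6)) c6 := by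
  intro e₁ he₁ e₂ he₂ hne hv
  induction e₁ using Sym2.inductionOn with | hf a b =>
  induction e₂ using Sym2.inductionOn with | hf a' b' =>
  simp only [mem_edgeSet, top_adj] at he₁ he₂
  obtain ⟨v, hv1, hv2⟩ := hv
  rw [Sym2.mem_iff] at hv1 hv2
  have key : ∀ p q r : Fin 6, p ≠ q → p ≠ r → s(p,q) ≠ s(p,r) → c6 s(p,q) ≠ c6 s(p,r) := by
    intro p q r h1 h2 h3
    rw [c6_pair, c6_pair]
    exact g6_proper p q r h1 h2 (fun h => h3 (by rw [h]))
  rcases hv1 with rfl | rfl <;> rcases hv2 with rfl | rfl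
  · exact key v b b' he₁ he₂ hne
  · rw [Sym2.eq_swap (a := a')]
    exact key v b a' he₁ (Ne.symm he₂) (fun h => hne (h.trans Sym2.eq_swap))
  · rw [Sym2.eq_swap (a := a)]
    exact key v a b' (Ne.symm he₁) he₂ (fun h => hne (Sym2.eq_swap.trans h))
  · rw [Sym2.eq_swap (a := a), Sym2.eq_swap (a := a')]
    exact key v a a' (Ne.symm he₁) (Ne.symm he₂) (fun h => hne (Sym2.eq_swap.trans (h.trans Sym2.eq_swap)))

lemma part1mem : ∀ e ∈ (⊤ : SimpleGraph (Fin 6)).edgeSet, c6 e ∈ ({0,1,2,3,4} : Finset ℕ) := by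
  intro e he
  induction e using Sym2.inductionOn with | hf a b =>
  simp only [mem_edgeSet, top_adj] at he
  exact g6_mem a b he

variable {c : Sym2 (Fin 6) → ℕ}

lemma prop_ne (hc : IsProperEdgeColoring (⊤ : SimpleGraph (Fin 6)) c)
    {u v w : Fin 6} (hvu : u ≠ v) (hwu : u ≠ w) (hvw : v ≠ w) :
    c s(u, v) ≠ c s(u, w) := by
  apply hc
  · simpa using hvu
  · simpa using hwu
  · intro h
    rw [Sym2.eq_iff] at h
    rcases h with ⟨_, rfl⟩ | ⟨rfl, rfl⟩
    · exact hvw rfl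
    · exact hvw rfl
  · exact ⟨u, by simp, by simp⟩

lemma csw (c : Sym2 (Fin 6) → ℕ) (u v : Fin 6) : c s(u, v) = c s(v, u) := by rw [Sym2.eq_swap]

lemma color_surj (hc : IsProperEdgeColoring (⊤ : SimpleGraph (Fin 6)) c)
    {t : Finset ℕ} (ht : t.card ≤ 5)
    (hall : ∀ e ∈ (⊤ : SimpleGraph (Fin 6)).edgeSet, c e ∈ t)
    (u : Fin 6) {k : ℕ} (hk : k ∈ t) : ∃ v, v ≠ u ∧ c s(u, v) = k := by
  classical
  set S : Finset (Fin 6) := ({u} : Finset (Fin 6))ᶜ with hS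
  have hScard : S.card = 5 := by
    rw [hS, Finset.card_compl]; simp
  have hinj : Set.InjOn (fun v => c s(u, v)) S := by
    intro a ha b hb hab
    simp only [hS, Finset.coe_compl, Set.mem_compl_iff, Finset.coe_singleton,
      Set.mem_singleton_iff] at ha hb
    by_contra hne
    exact prop_ne hc (Ne.symm ha) (Ne.symm hb) hne hab
  have hcard : (S.image (fun v => c s(u, v))).card = 5 := by
    rw [Finset.card_image_of_injOn hinj, hScard]
  have hsub : S.image (fun v => c s(u, v)) ⊆ t := by
    intro m hm
    rw [Finset.mem_image] at hm
    obtain ⟨v, hv, rfl⟩ := hm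
    apply hall
    simp only [hS, Finset.mem_compl, Finset.mem_singleton] at hv
    simp [Ne.symm hv]
  have heq : S.image (fun v => c s(u, v)) = t :=
    Finset.eq_of_subset_of_card_le hsub (by omega)
  rw [← heq, Finset.mem_image] at hk
  obtain ⟨v, hv, hvk⟩ := hk
  simp only [hS, Finset.mem_compl, Finset.mem_singleton] at hv
  exact ⟨v, hv, hvk⟩

lemma six_cover {y x y1 y2 x1 x2 : Fin 6}
    (h1 : y ≠ x) (h2 : y ≠ y1) (h3 : y ≠ y2) (h4 : y ≠ x1) (h5 : y ≠ x2)
    (h6 : x ≠ y1) (h7 : x ≠ y2) (h8 : x ≠ x1) (h9 : x ≠ x2)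
    (h10 : y1 ≠ y2) (h11 : y1 ≠ x1) (h12 : y1 ≠ x2)
    (h13 : y2 ≠ x1) (h14 : y2 ≠ x2) (h15 : x1 ≠ x2) (z : Fin 6) :
    z = y ∨ z = x ∨ z = y1 ∨ z = y2 ∨ z = x1 ∨ z = x2 := by
  have huniv : ({y, x, y1, y2, x1, x2} : Finset (Fin 6)) = Finset.univ := by
    apply Finset.eq_univ_of_card
    rw [Finset.card_insert_of_notMem (by simp [h1, h2, h3, h4, h5]),
        Finset.card_insert_of_notMem (by simp [h6, h7, h8, h9]),
        Finset.card_insert_of_notMem (by simp [h10, h11, h12]),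
        Finset.card_insert_of_notMem (by simp [h13, h14]),
        Finset.card_insert_of_notMem (by simp [h15])]
    simp
  have hz : z ∈ ({y, x, y1, y2, x1, x2} : Finset (Fin 6)) := huniv ▸ Finset.mem_univ z
  simpa using hz

lemma main_deduction (hc : IsProperEdgeColoring (⊤ : SimpleGraph (Fin 6)) c)
    {t : Finset ℕ} (ht : t.card ≤ 5)
    (hall : ∀ e ∈ (⊤ : SimpleGraph (Fin 6)).edgeSet, c e ∈ t)
    {y x y1 y2 x1 x2 : Fin 6}
    (h1 : y ≠ x) (h2 : y ≠ y1) (h3 : y ≠ y2) (h4 : y ≠ x1) (h5 : y ≠ x2)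
    (h6 : x ≠ y1) (h7 : x ≠ y2) (h8 : x ≠ x1) (h9 : x ≠ x2)
    (h10 : y1 ≠ y2) (h11 : y1 ≠ x1) (h12 : y1 ≠ x2)
    (h13 : y2 ≠ x1) (h14 : y2 ≠ x2) (h15 : x1 ≠ x2)
    (r1 : c s(y,x) ≠ c s(y,y1)) (r2 : c s(y,x) ≠ c s(y,y2))
    (r3 : c s(y,x) ≠ c s(x,x1)) (r4 : c s(y,x) ≠ c s(x,x2))
    (r5 : c s(y,y1) ≠ c s(y,y2)) (r6 : c s(y,y1) ≠ c s(x,x1))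
    (r7 : c s(y,y1) ≠ c s(x,x2)) (r8 : c s(y,y2) ≠ c s(x,x1))
    (r9 : c s(y,y2) ≠ c s(x,x2)) (r10 : c s(x,x1) ≠ c s(x,x2)) : False := by
  have memt : ∀ u v : Fin 6, u ≠ v → c s(u,v) ∈ t := by
    intro u v h; exact hall _ (by simp [h])
  have cover := six_cover h1 h2 h3 h4 h5 h6 h7 h8 h9 h10 h11 h12 h13 h14 h15
  -- Step 1a : the A1-colored edge at x goes to y2
  have F1 : c s(x, y2) = c s(y, y1) := by
    obtain ⟨z, hz, hcz⟩ := color_surj hc ht hall x (memt y y1 h2)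
    rcases cover z with h | h | h | h | h | h <;> rw [h] at hcz
    · exact absurd ((csw c y x).trans hcz) r1
    · exact absurd h hz
    · exact absurd (by rw [csw c y1 x, csw c y1 y]; exact hcz)
        (prop_ne hc h6.symm h2.symm h1.symm)
    · exact hcz
    · exact absurd hcz.symm r6
    · exact absurd hcz.symm r7
  -- Step 1b : the A2-colored edge at x goes to y1
  have F2 : c s(x, y1) = c s(y, y2) := by
    obtain ⟨z, hz, hcz⟩ := color_surj hc ht hall x (memt y y2 h3)
    rcases cover z with h | h | h | h | h | h <;> rw [h] at hcz
    · exact absurd ((csw c y x).trans hcz) r2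
    · exact absurd h hz
    · exact hcz
    · exact absurd (by rw [csw c y2 x, csw c y2 y]; exact hcz)
        (prop_ne hc h7.symm h3.symm h1.symm)
    · exact absurd hcz.symm r8
    · exact absurd hcz.symm r9
  -- Step 1d : the B2-colored edge at y goes to x1
  have F3 : c s(y, x1) = c s(x, x2) := by
    obtain ⟨z, hz, hcz⟩ := color_surj hc ht hall y (memt x x2 h9)
    rcases cover z with h | h | h | h | h | h <;> rw [h] at hcz
    · exact absurd h hz
    · exact absurd hcz r4
    · exact absurd hcz r7
    · exact absurd hcz r9
    · exact hcz
    · exact absurd (by rw [csw c x2 y, csw c x2 x]; exact hcz)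
        (prop_ne hc h5.symm h9.symm h1)
  -- Step 2 : the A1-colored edge at x1 goes to x2
  have F4 : c s(x1, x2) = c s(y, y1) := by
    obtain ⟨z, hz, hcz⟩ := color_surj hc ht hall x1 (memt y y1 h2)
    rcases cover z with h | h | h | h | h | h <;> rw [h] at hcz
    · exact absurd (show c s(x,x2) = c s(y,y1) by
        rw [← F3, csw c y x1]; exact hcz).symm r7
    · exact absurd ((csw c x x1).trans hcz).symm r6
    · exact absurd (by rw [csw c y1 x1, csw c y1 y]; exact hcz)
        (prop_ne hc h11 h2.symm h4.symm)
    · exact absurd (by rw [csw c y2 x1, csw c y2 x, hcz, F1])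
        (prop_ne hc h13 h7.symm h8.symm)
    · exact absurd h hz
    · exact hcz
  -- Step 3 : the A2-colored edge at x1 has nowhere to go
  obtain ⟨z, hz, hcz⟩ := color_surj hc ht hall x1 (memt y y2 h3)
  rcases cover z with h | h | h | h | h | h <;> rw [h] at hcz
  · exact absurd (show c s(x,x2) = c s(y,y2) by
      rw [← F3, csw c y x1]; exact hcz).symm r9
  · exact absurd ((csw c x x1).trans hcz).symm r8
  · exact absurd (by rw [csw c y1 x1, csw c y1 x, hcz, F2])
      (prop_ne hc h11 h6.symm h8.symm)
  · exact absurd (by rw [csw c y2 x1, csw c y2 y]; exact hcz)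
      (prop_ne hc h13 h3.symm h4.symm)
  · exact absurd h hz
  · exact r5 (F4.symm.trans hcz)

/-- `K₆` admits a proper edge coloring with only 5 colors, and every
proper edge coloring of `K₆` using at most 5 colors contains no rainbow copy of
`DS_{2,2}`. -/
theorem K6_five_colors_no_rainbow_DS22 :
    (∃ c : Sym2 (Fin 6) → ℕ, IsProperEdgeColoring (⊤ : SimpleGraph (Fin 6)) c ∧
      ∃ t : Finset ℕ, t.card ≤ 5 ∧
        ∀ e ∈ (⊤ : SimpleGraph (Fin 6)).edgeSet, c e ∈ t) ∧
    (∀ c : Sym2 (Fin 6) → ℕ, IsProperEdgeColoring (⊤ : SimpleGraph (Fin 6)) c →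
      (∃ t : Finset ℕ, t.card ≤ 5 ∧
        ∀ e ∈ (⊤ : SimpleGraph (Fin 6)).edgeSet, c e ∈ t) →
      ¬ ContainsRainbowCopy (doubleStar 2 2) (⊤ : SimpleGraph (Fin 6)) c) := by
  constructor
  · exact ⟨c6, part1, {0, 1, 2, 3, 4}, by decide, part1mem⟩
  · rintro c hc ⟨t, ht, hall⟩ ⟨f, ⟨hinj, hadj⟩, hr⟩
    have m0 : s((Sum.inl 0 : Fin 2 ⊕ Fin 2 ⊕ Fin 2), Sum.inl 1) ∈ (doubleStar 2 2).edgeSet := by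
      rw [SimpleGraph.mem_edgeSet, doubleStar, SimpleGraph.fromEdgeSet_adj]
      exact ⟨Or.inl (Or.inl rfl), by decide⟩
    have my : ∀ i : Fin 2,
        s((Sum.inl 0 : Fin 2 ⊕ Fin 2 ⊕ Fin 2), Sum.inr (Sum.inl i)) ∈ (doubleStar 2 2).edgeSet := by
      intro i
      rw [SimpleGraph.mem_edgeSet, doubleStar, SimpleGraph.fromEdgeSet_adj]
      exact ⟨Or.inl (Or.inr ⟨i, rfl⟩), by simp⟩
    have mx : ∀ j : Fin 2,
        s((Sum.inl 1 : Fin 2 ⊕ Fin 2 ⊕ Fin 2), Sum.inr (Sum.inr j)) ∈ (doubleStar 2 2).edgeSet := by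
      intro j
      rw [SimpleGraph.mem_edgeSet, doubleStar, SimpleGraph.fromEdgeSet_adj]
      exact ⟨Or.inr ⟨j, rfl⟩, by simp⟩
    have R : ∀ a b a' b' : Fin 2 ⊕ Fin 2 ⊕ Fin 2,
        s(a, b) ∈ (doubleStar 2 2).edgeSet → s(a', b') ∈ (doubleStar 2 2).edgeSet →
        s(a, b) ≠ s(a', b') → c s(f a, f b) ≠ c s(f a', f b') := by
      intro a b a' b' hm hm' hne
      have := hr _ hm _ hm' hne
      simpa [Sym2.map_pair_eq] using this
    exact main_deduction hc ht hall
      (hinj.ne (by decide)) (hinj.ne (by decide)) (hinj.ne (by decide))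
      (hinj.ne (by decide)) (hinj.ne (by decide)) (hinj.ne (by decide))
      (hinj.ne (by decide)) (hinj.ne (by decide)) (hinj.ne (by decide))
      (hinj.ne (by decide)) (hinj.ne (by decide)) (hinj.ne (by decide))
      (hinj.ne (by decide)) (hinj.ne (by decide)) (hinj.ne (by decide))
      (R _ _ _ _ m0 (my 0) (by decide)) (R _ _ _ _ m0 (my 1) (by decide))
      (R _ _ _ _ m0 (mx 0) (by decide)) (R _ _ _ _ m0 (mx 1) (by decide))
      (R _ _ _ _ (my 0) (my 1) (by decide)) (R _ _ _ _ (my 0) (mx 0) (by decide))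
      (R _ _ _ _ (my 0) (mx 1) (by decide)) (R _ _ _ _ (my 1) (mx 0) (by decide))
      (R _ _ _ _ (my 1) (mx 1) (by decide)) (R _ _ _ _ (mx 0) (mx 1) (by decide))
end
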